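/- For every angle θ with 0 < θ < π, there exists a non-periodic tiling of the Euclidean plane ℝ² by isometric copies of the unit equilateral triangle T and the unit rhombus R(θ) in which each of the two prototiles is used infinitely many times: the set of tiles congruent to T is infinite and the set of tiles congruent to R(θ) is infinite. -/

import Mathlib

noncomputable section

open Set Metric

/-- The Euclidean plane ℝ². -/
abbrev Pt : Type := EuclideanSpace ℝ (Fin 2)

/-- A point of the plane from coordinates. -/
def pt (a b : ℝ) : Pt := !₂[a, b]

/-- The unit equilateral triangle. -/
def uT : Set Pt := convexHull ℝ {pt 0 0, pt 1 0, pt (1/2) (Real.sqrt 3 / 2)}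

/-- The unit rhombus of angle θ. -/
def uR (θ : ℝ) : Set Pt :=
  convexHull ℝ
    {pt 0 0, pt 1 0, pt (Real.cos θ) (Real.sin θ), pt (1 + Real.cos θ) (Real.sin θ)}

/-- `𝒯` is a tiling of the plane by isometric copies of the prototiles in `protos`. -/
def IsTilingBy (𝒯 : Set (Set Pt)) (protos : Set (Set Pt)) : Prop :=
  𝒯.Countable ∧ ⋃₀ 𝒯 = univ ∧
  (∀ t ∈ 𝒯, ∀ s ∈ 𝒯, t ≠ s → interior t ∩ interior s = ∅) ∧
  (∀ t ∈ 𝒯, ∃ P ∈ protos, ∃ f : Pt ≃ᵢ Pt, t = f '' P)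

/-- Translating every tile of `𝒯` by `v`. -/
def translateTiles (v : Pt) (𝒯 : Set (Set Pt)) : Set (Set Pt) :=
  (fun t => (fun x => x + v) '' t) '' 𝒯

/-- `𝒯` is non-periodic: no nonzero translation maps the set of tiles onto itself. -/
def Nonperiodic (𝒯 : Set (Set Pt)) : Prop :=
  ∀ v : Pt, v ≠ 0 → translateTiles v 𝒯 ≠ 𝒯

namespace S8

@[simp] lemma pt0 (a b : ℝ) : (pt a b) 0 = a := rfl
@[simp] lemma pt1 (a b : ℝ) : (pt a b) 1 = b := rfl

lemma pt_ext {p q : Pt} (h0 : p 0 = q 0) (h1 : p 1 = q 1) : p = q := by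
  refine PiLp.ext fun i => ?_
  fin_cases i
  · exact h0
  · exact h1

@[simp] lemma add_apply (p q : Pt) (i : Fin 2) : (p + q) i = p i + q i := rfl
@[simp] lemma smul_apply (c : ℝ) (p : Pt) (i : Fin 2) : (c • p) i = c * p i := rfl
@[simp] lemma sub_apply (p q : Pt) (i : Fin 2) : (p - q) i = p i - q i := rfl
@[simp] lemma neg_apply (p : Pt) (i : Fin 2) : (-p) i = -(p i) := rfl
@[simp] lemma zero_apply (i : Fin 2) : (0 : Pt) i = 0 := rfl

/-- 2×2 determinant functional: `det2 x p = x₀ p₁ − x₁ p₀`. Linear in `p` (and in `x`). -/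
def det2 (x p : Pt) : ℝ := x 0 * p 1 - x 1 * p 0

lemma det2_add (x p q : Pt) : det2 x (p + q) = det2 x p + det2 x q := by
  simp [det2]; ring

lemma det2_smul (x : Pt) (c : ℝ) (p : Pt) : det2 x (c • p) = c * det2 x p := by
  simp [det2]; ring

lemma det2_addl (x y p : Pt) : det2 (x + y) p = det2 x p + det2 y p := by
  simp [det2]; ring

lemma det2_smull (c : ℝ) (x p : Pt) : det2 (c • x) p = c * det2 x p := by
  simp [det2]; ring

lemma det2_zero (x : Pt) : det2 x 0 = 0 := by simp [det2]

/-- closed half planes -/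
lemma convex_le (x : Pt) (c : ℝ) : Convex ℝ {p : Pt | det2 x p ≤ c} := by
  intro p hp q hq a b ha hb hab
  simp only [mem_setOf_eq] at *
  have : det2 x (a • p + b • q) = a * det2 x p + b * det2 x q := by
    rw [det2_add, det2_smul, det2_smul]
  rw [this]
  calc a * det2 x p + b * det2 x q ≤ a * c + b * c := by
        apply add_le_add <;> apply mul_le_mul_of_nonneg_left <;> assumption
    _ = c := by rw [← add_mul, hab, one_mul]

lemma convex_ge (x : Pt) (c : ℝ) : Convex ℝ {p : Pt | c ≤ det2 x p} := by
  intro p hp q hq a b ha hb hab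
  simp only [mem_setOf_eq] at *
  have : det2 x (a • p + b • q) = a * det2 x p + b * det2 x q := by
    rw [det2_add, det2_smul, det2_smul]
  rw [this]
  calc (c:ℝ) = a * c + b * c := by rw [← add_mul, hab, one_mul]
    _ ≤ a * det2 x p + b * det2 x q := by
        apply add_le_add <;> apply mul_le_mul_of_nonneg_left <;> assumption

lemma hull_le {V : Set Pt} {x : Pt} {c : ℝ} (h : ∀ v ∈ V, det2 x v ≤ c) :
    convexHull ℝ V ⊆ {p : Pt | det2 x p ≤ c} :=
  convexHull_min h (convex_le x c)

lemma hull_ge {V : Set Pt} {x : Pt} {c : ℝ} (h : ∀ v ∈ V, c ≤ det2 x v) :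
    convexHull ℝ V ⊆ {p : Pt | c ≤ det2 x p} :=
  convexHull_min h (convex_ge x c)

lemma norm_pt (a b : ℝ) : ‖pt a b‖ = Real.sqrt (a ^ 2 + b ^ 2) := by
  rw [EuclideanSpace.norm_eq, Fin.sum_univ_two]
  simp [Real.norm_eq_abs, sq_abs]

/-- interior of a closed halfplane is contained in the open one -/
lemma interior_le {x : Pt} (hx : 0 < x 0 ^ 2 + x 1 ^ 2) (c : ℝ) :
    interior {p : Pt | det2 x p ≤ c} ⊆ {p : Pt | det2 x p < c} := by
  intro p hp
  rw [mem_interior_iff_mem_nhds, Metric.mem_nhds_iff] at hp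
  obtain ⟨ε, hε, hball⟩ := hp
  set N : ℝ := Real.sqrt (x 0 ^ 2 + x 1 ^ 2) with hN
  have hNpos : 0 < N := Real.sqrt_pos.mpr hx
  set z : Pt := (ε / (2 * N)) • pt (-(x 1)) (x 0) with hz
  have hzn : ‖z‖ = ε / 2 := by
    rw [hz, norm_smul, norm_pt]
    have h1 : (-(x 1)) ^ 2 + (x 0) ^ 2 = x 0 ^ 2 + x 1 ^ 2 := by ring
    rw [h1, ← hN]
    have h2 : |ε / (2 * N)| = ε / (2 * N) := by
      rw [abs_of_pos]; positivity
    rw [Real.norm_eq_abs, h2]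
    field_simp
  have hmem : p + z ∈ Metric.ball p ε := by
    rw [Metric.mem_ball, dist_eq_norm]
    have : p + z - p = z := by abel
    rw [this, hzn]
    linarith
  have hple : det2 x (p + z) ≤ c := hball hmem
  rw [det2_add] at hple
  have hbase : det2 x (pt (-(x 1)) (x 0)) = x 0 ^ 2 + x 1 ^ 2 := by
    simp [det2]; ring
  have hdz : det2 x z = (ε / (2 * N)) * (x 0 ^ 2 + x 1 ^ 2) := by
    rw [hz, det2_smul, hbase]
  have hpos : 0 < det2 x z := by
    rw [hdz]; positivity
  have hple' : det2 x p ≤ c := hball (Metric.mem_ball_self hε)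
  simp only [mem_setOf_eq]
  linarith

lemma interior_ge {x : Pt} (hx : 0 < x 0 ^ 2 + x 1 ^ 2) (c : ℝ) :
    interior {p : Pt | c ≤ det2 x p} ⊆ {p : Pt | c < det2 x p} := by
  intro p hp
  rw [mem_interior_iff_mem_nhds, Metric.mem_nhds_iff] at hp
  obtain ⟨ε, hε, hball⟩ := hp
  set N : ℝ := Real.sqrt (x 0 ^ 2 + x 1 ^ 2) with hN
  have hNpos : 0 < N := Real.sqrt_pos.mpr hx
  set z : Pt := (ε / (2 * N)) • pt (x 1) (-(x 0)) with hz
  have hzn : ‖z‖ = ε / 2 := by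
    rw [hz, norm_smul, norm_pt]
    have h1 : (x 1) ^ 2 + (-(x 0)) ^ 2 = x 0 ^ 2 + x 1 ^ 2 := by ring
    rw [h1, ← hN]
    have h2 : |ε / (2 * N)| = ε / (2 * N) := by
      rw [abs_of_pos]; positivity
    rw [Real.norm_eq_abs, h2]
    field_simp
  have hmem : p + z ∈ Metric.ball p ε := by
    rw [Metric.mem_ball, dist_eq_norm]
    have : p + z - p = z := by abel
    rw [this, hzn]
    linarith
  have hple : c ≤ det2 x (p + z) := hball hmem
  rw [det2_add] at hple
  have hbase : det2 x (pt (x 1) (-(x 0))) = -(x 0 ^ 2 + x 1 ^ 2) := by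
    simp [det2]; ring
  have hdz : det2 x z = -((ε / (2 * N)) * (x 0 ^ 2 + x 1 ^ 2)) := by
    rw [hz, det2_smul, hbase]; ring
  have hneg : det2 x z < 0 := by
    rw [hdz]
    have : 0 < (ε / (2 * N)) * (x 0 ^ 2 + x 1 ^ 2) := by positivity
    linarith
  have hple' : c ≤ det2 x p := hball (Metric.mem_ball_self hε)
  simp only [mem_setOf_eq]
  linarith

end S8
namespace S8

/-- coordinates w.r.t. a basis, via determinants -/
lemma repr2 (x y p : Pt) (hD : det2 x y ≠ 0) :
    p = ((-(det2 y p)) / det2 x y) • x + ((det2 x p) / det2 x y) • y := by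
  apply pt_ext <;>
  · simp only [add_apply, smul_apply, det2] at *
    rw [div_mul_eq_mul_div, div_mul_eq_mul_div, ← add_div, eq_div_iff hD]
    ring

/-- membership in a parallelogram hull -/
lemma mem_par (q x y : Pt) {γ δ : ℝ} (hγ0 : 0 ≤ γ) (hγ1 : γ ≤ 1) (hδ0 : 0 ≤ δ) (hδ1 : δ ≤ 1) :
    q + γ • x + δ • y ∈ convexHull ℝ {q, q + x, q + y, q + x + y} := by
  have h1 : q + δ • y ∈ convexHull ℝ {q, q + x, q + y, q + x + y} := by
    have := (convex_convexHull ℝ ({q, q + x, q + y, q + x + y} : Set Pt))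
    have hq : q ∈ convexHull ℝ ({q, q + x, q + y, q + x + y} : Set Pt) :=
      subset_convexHull ℝ _ (by simp)
    have hqy : q + y ∈ convexHull ℝ ({q, q + x, q + y, q + x + y} : Set Pt) :=
      subset_convexHull ℝ _ (by simp)
    have := this hq hqy (by linarith : (0:ℝ) ≤ 1 - δ) hδ0 (by ring)
    convert this using 1
    module
  have h2 : q + x + δ • y ∈ convexHull ℝ {q, q + x, q + y, q + x + y} := by
    have hconv := (convex_convexHull ℝ ({q, q + x, q + y, q + x + y} : Set Pt))
    have hq : q + x ∈ convexHull ℝ ({q, q + x, q + y, q + x + y} : Set Pt) :=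
      subset_convexHull ℝ _ (by simp)
    have hqy : q + x + y ∈ convexHull ℝ ({q, q + x, q + y, q + x + y} : Set Pt) :=
      subset_convexHull ℝ _ (by simp)
    have := hconv hq hqy (by linarith : (0:ℝ) ≤ 1 - δ) hδ0 (by ring)
    convert this using 1
    module
  have hconv := (convex_convexHull ℝ ({q, q + x, q + y, q + x + y} : Set Pt))
  have := hconv h1 h2 (by linarith : (0:ℝ) ≤ 1 - γ) hγ0 (by ring)
  convert this using 1
  module

/-- membership in a triangle hull -/
lemma mem_tri (q x y : Pt) {a b : ℝ} (ha : 0 ≤ a) (hb : 0 ≤ b) (hab : a + b ≤ 1) :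
    q + a • x + b • y ∈ convexHull ℝ {q, q + x, q + y} := by
  rcases eq_or_lt_of_le (add_nonneg ha hb) with h0 | h0
  · have ha0 : a = 0 := by linarith [le_of_eq h0.symm]
    have hb0 : b = 0 := by linarith
    subst ha0; subst hb0
    have : q + (0:ℝ) • x + (0:ℝ) • y = q := by module
    rw [this]
    exact subset_convexHull ℝ _ (by simp)
  · set t := a + b with ht
    have htpos : 0 < t := h0
    have hmid : q + (a / t) • x + (b / t) • y ∈ convexHull ℝ {q, q + x, q + y} := by
      have hconv := (convex_convexHull ℝ ({q, q + x, q + y} : Set Pt))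
      have hq1 : q + x ∈ convexHull ℝ ({q, q + x, q + y} : Set Pt) :=
        subset_convexHull ℝ _ (by simp)
      have hq2 : q + y ∈ convexHull ℝ ({q, q + x, q + y} : Set Pt) :=
        subset_convexHull ℝ _ (by simp)
      have := hconv hq1 hq2 (by positivity : (0:ℝ) ≤ a / t) (by positivity : (0:ℝ) ≤ b / t)
        (by field_simp; linarith)
      convert this using 1
      have hsum : a / t + b / t = 1 := by field_simp; linarith
      have hr : (a/t) • (q + x) + (b/t) • (q + y) = (a/t + b/t) • q + (a/t) • x + (b/t) • y := by
        module
      rw [hr, hsum, one_smul]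
    have hconv := (convex_convexHull ℝ ({q, q + x, q + y} : Set Pt))
    have hq : q ∈ convexHull ℝ ({q, q + x, q + y} : Set Pt) :=
      subset_convexHull ℝ _ (by simp)
    have := hconv hq hmid (by linarith : (0:ℝ) ≤ 1 - t) (le_of_lt htpos) (by ring)
    convert this using 1
    have hx : t • ((a / t) • x) = a • x := by
      rw [smul_smul]; congr 1; field_simp
    have hy : t • ((b / t) • y) = b • y := by
      rw [smul_smul]; congr 1; field_simp
    have : (1 - t) • q + t • (q + (a / t) • x + (b / t) • y)
        = q + t • ((a/t) • x) + t • ((b/t) • y) := by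
      module
    rw [this, hx, hy]

/-- diameter bound for triangles with unit sides -/
lemma tri_diam {q x y : Pt} (hx : ‖x‖ ≤ 1) (hy : ‖y‖ ≤ 1) (hxy : ‖x - y‖ ≤ 1)
    {p p' : Pt} (hp : p ∈ convexHull ℝ {q, q + x, q + y}) (hp' : p' ∈ convexHull ℝ {q, q + x, q + y}) :
    dist p p' ≤ 1 := by
  set V : Set Pt := {q, q + x, q + y} with hV
  have key : ∀ (A B z : Pt), A - B = z → ‖z‖ ≤ 1 → dist A B ≤ 1 := by
    intro A B z h hz
    rw [dist_eq_norm, h]; exact hz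
  have hz0 : ‖(0:Pt)‖ ≤ 1 := by simp
  have d11 : dist q q ≤ 1 := key _ _ 0 (by abel) hz0
  have d12 : dist q (q + x) ≤ 1 := key _ _ (-x) (by abel) (by rwa [norm_neg])
  have d13 : dist q (q + y) ≤ 1 := key _ _ (-y) (by abel) (by rwa [norm_neg])
  have d21 : dist (q + x) q ≤ 1 := key _ _ x (by abel) hx
  have d22 : dist (q + x) (q + x) ≤ 1 := key _ _ 0 (by abel) hz0
  have d23 : dist (q + x) (q + y) ≤ 1 := key _ _ (x - y) (by abel) hxy
  have d31 : dist (q + y) q ≤ 1 := key _ _ y (by abel) hy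
  have d32 : dist (q + y) (q + x) ≤ 1 := key _ _ (-(x - y)) (by abel) (by rwa [norm_neg])
  have d33 : dist (q + y) (q + y) ≤ 1 := key _ _ 0 (by abel) hz0
  have hpair : ∀ v ∈ V, ∀ w ∈ V, dist v w ≤ 1 := by
    intro v hv w hw
    simp only [hV, mem_insert_iff, mem_singleton_iff] at hv hw
    rcases hv with rfl | rfl | rfl <;> rcases hw with rfl | rfl | rfl <;> assumption
  have step1 : ∀ v ∈ V, ∀ r ∈ convexHull ℝ V, dist r v ≤ 1 := by
    intro v hv r hr
    have : convexHull ℝ V ⊆ Metric.closedBall v 1 :=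
      convexHull_min (fun w hw => by simpa [Metric.mem_closedBall] using hpair w hw v hv)
        (convex_closedBall v 1)
    simpa [Metric.mem_closedBall] using this hr
  have step2 : convexHull ℝ V ⊆ Metric.closedBall p 1 := by
    apply convexHull_min _ (convex_closedBall p 1)
    intro v hv
    simp only [Metric.mem_closedBall]
    rw [dist_comm]
    exact step1 v hv p hp
  have := step2 hp'
  simpa [Metric.mem_closedBall, dist_comm] using this

end S8
namespace S8

/-- the underlying affine function of our isometries -/
def mvFun (a b c d : ℝ) (t : Pt) : Pt → Pt :=
  fun p => pt (a * p 0 + b * p 1 + t 0) (c * p 0 + d * p 1 + t 1)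

def linMap (a b c d : ℝ) : Pt →ₗ[ℝ] Pt where
  toFun := fun p => pt (a * p 0 + b * p 1) (c * p 0 + d * p 1)
  map_add' := by
    intro p q
    apply pt_ext <;> simp <;> ring
  map_smul' := by
    intro r p
    apply pt_ext <;> simp <;> ring

def affMap (a b c d : ℝ) (t : Pt) : Pt →ᵃ[ℝ] Pt where
  toFun := mvFun a b c d t
  linear := linMap a b c d
  map_vadd' := by
    intro p v
    apply pt_ext <;> simp [mvFun, linMap, vadd_eq_add] <;> ring

/-- an isometry of the plane from an orthogonal matrix and a translation -/
def mkIso (a b c d : ℝ) (t : Pt) (h1 : a^2 + c^2 = 1) (h2 : b^2 + d^2 = 1)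
    (h3 : a*b + c*d = 0) : Pt ≃ᵢ Pt := by
  set k : ℝ := a*d - b*c with hk
  have F1 : b = -(c * k) := by rw [hk]; linear_combination a*h3 - b*h1
  have F2 : d = a * k := by rw [hk]; linear_combination c*h3 - d*h1
  have F3 : k^2 = 1 := by
    rw [hk]; linear_combination (b^2 + d^2)*h1 + h2 - (a*b + c*d)*h3
  have hb2 : b^2 = c^2 := by linear_combination (b - c*k)*F1 + c^2*F3
  have hd2 : d^2 = a^2 := by linear_combination (d + a*k)*F2 + a^2*F3
  have hr1 : a^2 + b^2 = 1 := by rw [hb2]; exact h1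
  have hr2 : c^2 + d^2 = 1 := by rw [hd2]; linarith [h1]
  have hr3 : a*c + b*d = 0 := by linear_combination d*F1 - (c*k)*F2 - (a*c)*F3
  exact
  { toFun := mvFun a b c d t
    invFun := fun p => pt (a * (p 0 - t 0) + c * (p 1 - t 1)) (b * (p 0 - t 0) + d * (p 1 - t 1))
    left_inv := by
      intro p
      apply pt_ext <;> simp [mvFun]
      · linear_combination (p 0)*h1 + (p 1)*h3
      · linear_combination (p 0)*h3 + (p 1)*h2
    right_inv := by
      intro p
      apply pt_ext <;> simp [mvFun]
      · linear_combination (p 0 - t 0)*hr1 + (p 1 - t 1)*hr3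
      · linear_combination (p 0 - t 0)*hr3 + (p 1 - t 1)*hr2
    isometry_toFun := by
      apply Isometry.of_dist_eq
      intro p q
      rw [EuclideanSpace.dist_eq, EuclideanSpace.dist_eq, Fin.sum_univ_two, Fin.sum_univ_two]
      congr 1
      simp only [mvFun, pt0, pt1, Real.dist_eq, sq_abs]
      linear_combination ((p 0 - q 0)^2)*h1 + ((p 1 - q 1)^2)*h2 + (2*(p 0 - q 0)*(p 1 - q 1))*h3 }

lemma mkIso_coe (a b c d : ℝ) (t : Pt) (h1 : a^2 + c^2 = 1) (h2 : b^2 + d^2 = 1)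
    (h3 : a*b + c*d = 0) : ⇑(mkIso a b c d t h1 h2 h3) = mvFun a b c d t := rfl

lemma mkIso_image (a b c d : ℝ) (t : Pt) (h1 : a^2 + c^2 = 1) (h2 : b^2 + d^2 = 1)
    (h3 : a*b + c*d = 0) (V : Set Pt) :
    (mkIso a b c d t h1 h2 h3) '' (convexHull ℝ V) = convexHull ℝ ((mvFun a b c d t) '' V) := by
  have hco : ⇑(affMap a b c d t) = mvFun a b c d t := rfl
  rw [mkIso_coe, ← hco, AffineMap.image_convexHull]

lemma mvFun_pt (a b c d : ℝ) (t : Pt) (x y : ℝ) :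
    mvFun a b c d t (pt x y) = pt (a*x + b*y + t 0) (c*x + d*y + t 1) := rfl

end S8
namespace S8

def r3 : ℝ := Real.sqrt 3 / 2

lemma r3_sq : r3^2 = 3/4 := by
  rw [r3, div_pow, Real.sq_sqrt (by norm_num : (3:ℝ) ≥ 0)]
  norm_num

lemma r3_pos : 0 < r3 := by
  rw [r3]
  positivity

def par (q x y : Pt) : Set Pt := convexHull ℝ {q, q + x, q + y, q + x + y}
def tri (q x y : Pt) : Set Pt := convexHull ℝ {q, q + x, q + y}

def uu : Pt := pt 1 0
def ee : Pt := pt (1/2) r3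
def gg : Pt := pt (1/2) (-r3)
def ww (C S : ℝ) : Pt := pt C S
def dd (C S : ℝ) : Pt := pt (-(C/2) - r3*S) (-(S/2) + r3*C)
def d2v (C S : ℝ) : ℝ := -(S/2) + r3*C
def b2v (C S : ℝ) : ℝ := S/2 + r3*C

section Param

variable (C S : ℝ)

-- determinant value table
lemma v_uu_ww : det2 uu (ww C S) = S := by simp [det2, uu, ww]
lemma v_ww_uu : det2 (ww C S) uu = -S := by simp [det2, uu, ww]
lemma v_uu_dd : det2 uu (dd C S) = d2v C S := by simp [det2, uu, dd, d2v]
lemma v_uu_gg : det2 uu gg = -r3 := by simp [det2, uu, gg]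
lemma v_uu_ee : det2 uu ee = r3 := by simp [det2, uu, ee]
lemma v_gg_uu : det2 gg uu = r3 := by simp [det2, uu, gg]
lemma v_ww_gg : det2 (ww C S) gg = -(b2v C S) := by simp [det2, ww, gg, b2v]; ring
lemma v_gg_ww : det2 gg (ww C S) = b2v C S := by simp [det2, ww, gg, b2v]; ring
lemma v_dd_gg : det2 (dd C S) gg = S := by
  simp [det2, dd, gg]
  linear_combination S * r3_sq
lemma v_gg_dd : det2 gg (dd C S) = -S := by
  simp [det2, dd, gg]
  linear_combination (-S) * r3_sq
lemma v_zero_l (p : Pt) : det2 p p = 0 := by simp [det2]; ring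

lemma v_ww_dd (hCS : C^2 + S^2 = 1) : det2 (ww C S) (dd C S) = r3 := by
  simp [det2, ww, dd]
  linear_combination r3 * hCS
lemma v_dd_ww (hCS : C^2 + S^2 = 1) : det2 (dd C S) (ww C S) = -r3 := by
  simp [det2, ww, dd]
  linear_combination (-r3) * hCS

-- functional identities
lemma id1 (hCS : C^2 + S^2 = 1) (p : Pt) :
    S * det2 (dd C S) p = -r3 * det2 uu p + (d2v C S) * det2 (ww C S) p := by
  simp only [det2, dd, ww, uu, d2v, pt0, pt1]
  linear_combination (-(r3 * p 1)) * hCS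

lemma id2 (p : Pt) :
    S * det2 uu p = -r3 * det2 (dd C S) p + (-(d2v C S)) * det2 gg p := by
  simp only [det2, dd, gg, uu, d2v, pt0, pt1]
  linear_combination (-(S * p 1)) * r3_sq

lemma id3 (p : Pt) :
    r3 * det2 (ww C S) p = -S * det2 gg p + (b2v C S) * det2 uu p := by
  simp only [det2, ww, gg, uu, b2v, pt0, pt1]
  ring

lemma id4 (hCS : C^2 + S^2 = 1) (p : Pt) :
    r3 * det2 gg p = -S * det2 (ww C S) p + (-(b2v C S)) * det2 (dd C S) p := by
  simp only [det2, ww, gg, dd, b2v, pt0, pt1]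
  linear_combination (-(S*C*(p 1)) + S^2 * (p 0)) * r3_sq + (-(r3/2 * (p 1)) - r3^2 * (p 0)) * hCS

end Param

end S8
namespace S8

section Tiles

variable (C S : ℝ)

def qA (n m : ℕ) : Pt := (n:ℝ) • uu + (m:ℝ) • ww C S
def tileA (n m : ℕ) : Set Pt := par (qA C S n m) uu (ww C S)
def qB (n m : ℕ) : Pt := (n:ℝ) • ww C S + (m:ℝ) • dd C S
def tileB1 (n m : ℕ) : Set Pt := tri (qB C S n m) (ww C S) (ww C S + dd C S)
def tileB2 (n m : ℕ) : Set Pt := tri (qB C S n m) (dd C S) (ww C S + dd C S)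
def qC (n m : ℕ) : Pt := (n:ℝ) • dd C S + (m:ℝ) • gg
def tileC (n m : ℕ) : Set Pt := par (qC C S n m) (dd C S) gg
def qD (n m : ℕ) : Pt := (n:ℝ) • gg + (m:ℝ) • uu
def tileD1 (n m : ℕ) : Set Pt := tri (qD n m) gg uu
def tileD2 (n m : ℕ) : Set Pt := tri (qD n m + gg) uu ee

def TT : Set (Set Pt) :=
  {t | ∃ n m : ℕ, t = tileA C S n m} ∪ {t | ∃ n m : ℕ, t = tileB1 C S n m} ∪
  {t | ∃ n m : ℕ, t = tileB2 C S n m} ∪ {t | ∃ n m : ℕ, t = tileC C S n m} ∪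
  {t | ∃ n m : ℕ, t = tileD1 n m} ∪ {t | ∃ n m : ℕ, t = tileD2 n m}

lemma det2_lin (f x y : Pt) (a b : ℝ) : det2 f (a • x + b • y) = a * det2 f x + b * det2 f y := by
  rw [det2_add, det2_smul, det2_smul]

lemma par_sub_le (q x y f : Pt) (c : ℝ) (h0 : det2 f q ≤ c) (h1 : det2 f (q + x) ≤ c)
    (h2 : det2 f (q + y) ≤ c) (h3 : det2 f (q + x + y) ≤ c) :
    par q x y ⊆ {p : Pt | det2 f p ≤ c} := by
  apply hull_le
  rintro v (rfl | rfl | rfl | rfl) <;> assumption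

lemma par_sub_ge (q x y f : Pt) (c : ℝ) (h0 : c ≤ det2 f q) (h1 : c ≤ det2 f (q + x))
    (h2 : c ≤ det2 f (q + y)) (h3 : c ≤ det2 f (q + x + y)) :
    par q x y ⊆ {p : Pt | c ≤ det2 f p} := by
  apply hull_ge
  rintro v (rfl | rfl | rfl | rfl) <;> assumption

lemma tri_sub_le (q x y f : Pt) (c : ℝ) (h0 : det2 f q ≤ c) (h1 : det2 f (q + x) ≤ c)
    (h2 : det2 f (q + y) ≤ c) :
    tri q x y ⊆ {p : Pt | det2 f p ≤ c} := by
  apply hull_le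
  rintro v (rfl | rfl | rfl) <;> assumption

lemma tri_sub_ge (q x y f : Pt) (c : ℝ) (h0 : c ≤ det2 f q) (h1 : c ≤ det2 f (q + x))
    (h2 : c ≤ det2 f (q + y)) :
    tri q x y ⊆ {p : Pt | c ≤ det2 f p} := by
  apply hull_ge
  rintro v (rfl | rfl | rfl) <;> assumption

-- norm positivity facts
lemma n_uu : 0 < uu 0 ^ 2 + uu 1 ^ 2 := by simp [uu]
lemma n_gg : 0 < gg 0 ^ 2 + gg 1 ^ 2 := by
  simp [gg]
  nlinarith [r3_sq]
lemma n_ww (hCS : C^2 + S^2 = 1) : 0 < (ww C S) 0 ^ 2 + (ww C S) 1 ^ 2 := by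
  simp [ww]; nlinarith [hCS]
lemma n_dd (hCS : C^2 + S^2 = 1) : 0 < (dd C S) 0 ^ 2 + (dd C S) 1 ^ 2 := by
  simp [dd]
  nlinarith [r3_sq, hCS]

end Tiles

end S8
namespace S8

section Bounds

variable (C S : ℝ) (n m : ℕ)

lemma vqA_u : det2 uu (qA C S n m) = (m:ℝ) * S := by
  rw [qA, det2_lin, v_zero_l, v_uu_ww]; ring
lemma vqA_w : det2 (ww C S) (qA C S n m) = -((n:ℝ) * S) := by
  rw [qA, det2_lin, v_ww_uu, v_zero_l]; ring
lemma vqB_w (hCS : C^2 + S^2 = 1) : det2 (ww C S) (qB C S n m) = (m:ℝ) * r3 := by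
  rw [qB, det2_lin, v_zero_l, v_ww_dd C S hCS]; ring
lemma vqB_d (hCS : C^2 + S^2 = 1) : det2 (dd C S) (qB C S n m) = -((n:ℝ) * r3) := by
  rw [qB, det2_lin, v_dd_ww C S hCS, v_zero_l]; ring
lemma vqC_d : det2 (dd C S) (qC C S n m) = (m:ℝ) * S := by
  rw [qC, det2_lin, v_zero_l, v_dd_gg]; ring
lemma vqC_g : det2 gg (qC C S n m) = -((n:ℝ) * S) := by
  rw [qC, det2_lin, v_gg_dd, v_zero_l]; ring
lemma vqD_g : det2 gg (qD n m) = (m:ℝ) * r3 := by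
  rw [qD, det2_lin, v_zero_l, v_gg_uu]; ring
lemma vqD_u : det2 uu (qD n m) = -((n:ℝ) * r3) := by
  rw [qD, det2_lin, v_uu_gg, v_zero_l]; ring

-- interior bounds, family A
lemma intA (hS : 0 < S) (hCS : C^2 + S^2 = 1) : interior (tileA C S n m) ⊆
    {p : Pt | (m:ℝ)*S < det2 uu p ∧ det2 uu p < ((m:ℝ)+1)*S ∧
      -(((n:ℝ)+1)*S) < det2 (ww C S) p ∧ det2 (ww C S) p < -((n:ℝ)*S)} := by
  intro p hp
  have key : ∀ (f : Pt), (0 < f 0 ^ 2 + f 1 ^ 2) → ∀ c : ℝ,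
      tileA C S n m ⊆ {p : Pt | det2 f p ≤ c} → det2 f p < c := by
    intro f hf c hsub
    exact interior_le hf c (interior_mono hsub hp)
  have keyg : ∀ (f : Pt), (0 < f 0 ^ 2 + f 1 ^ 2) → ∀ c : ℝ,
      tileA C S n m ⊆ {p : Pt | c ≤ det2 f p} → c < det2 f p := by
    intro f hf c hsub
    exact interior_ge hf c (interior_mono hsub hp)
  have e1 := vqA_u C S n m
  have e2 := vqA_w C S n m
  have z1 : det2 uu uu = 0 := v_zero_l uu
  have z2 : det2 (ww C S) (ww C S) = 0 := v_zero_l _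
  have v1 := v_uu_ww C S
  have v2 := v_ww_uu C S
  refine ⟨?_, ?_, ?_, ?_⟩
  · apply keyg uu n_uu
    apply par_sub_ge <;> simp only [det2_add, e1, z1, v1] <;>
      nlinarith [hS, (Nat.cast_nonneg n : (0:ℝ) ≤ n), (Nat.cast_nonneg m : (0:ℝ) ≤ m)]
  · apply key uu n_uu
    apply par_sub_le <;> simp only [det2_add, e1, z1, v1] <;>
      nlinarith [hS, (Nat.cast_nonneg n : (0:ℝ) ≤ n), (Nat.cast_nonneg m : (0:ℝ) ≤ m)]
  · apply keyg (ww C S) (n_ww C S hCS)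
    apply par_sub_ge <;> simp only [det2_add, e2, z2, v2] <;>
      nlinarith [hS, (Nat.cast_nonneg n : (0:ℝ) ≤ n), (Nat.cast_nonneg m : (0:ℝ) ≤ m)]
  · apply key (ww C S) (n_ww C S hCS)
    apply par_sub_le <;> simp only [det2_add, e2, z2, v2] <;>
      nlinarith [hS, (Nat.cast_nonneg n : (0:ℝ) ≤ n), (Nat.cast_nonneg m : (0:ℝ) ≤ m)]

end Bounds

end S8
namespace S8

lemma det2_subl (x y p : Pt) : det2 (x - y) p = det2 x p - det2 y p := by
  simp [det2]; ring

lemma int_lt {t : Set Pt} {p : Pt} (hp : p ∈ interior t) (f : Pt)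
    (hf : 0 < f 0 ^ 2 + f 1 ^ 2) (c : ℝ) (hsub : t ⊆ {p : Pt | det2 f p ≤ c}) :
    det2 f p < c :=
  interior_le hf c (interior_mono hsub hp)

lemma int_gt {t : Set Pt} {p : Pt} (hp : p ∈ interior t) (f : Pt)
    (hf : 0 < f 0 ^ 2 + f 1 ^ 2) (c : ℝ) (hsub : t ⊆ {p : Pt | c ≤ det2 f p}) :
    c < det2 f p :=
  interior_ge hf c (interior_mono hsub hp)

section Bounds2

variable (C S : ℝ) (n m : ℕ)

lemma v_gg_ee : det2 gg ee = r3 := by simp [det2, gg, ee]; ring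

lemma n_wd (hCS : C^2 + S^2 = 1) : 0 < (ww C S + dd C S) 0 ^ 2 + (ww C S + dd C S) 1 ^ 2 := by
  simp [ww, dd]
  nlinarith [r3_sq, hCS]

lemma n_ug : 0 < (uu - gg) 0 ^ 2 + (uu - gg) 1 ^ 2 := by
  simp [uu, gg]
  nlinarith [r3_sq]

lemma intB1 (hS : 0 < S) (hCS : C^2 + S^2 = 1) : interior (tileB1 C S n m) ⊆
    {p : Pt | (m:ℝ)*r3 < det2 (ww C S) p ∧ det2 (ww C S) p < ((m:ℝ)+1)*r3 ∧
      -(((n:ℝ)+1)*r3) < det2 (dd C S) p ∧ det2 (dd C S) p < -((n:ℝ)*r3) ∧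
      det2 (ww C S + dd C S) p < ((m:ℝ) - n)*r3} := by
  intro p hp
  have e1 := vqB_w C S n m hCS
  have e2 := vqB_d C S n m hCS
  have z1 : det2 (ww C S) (ww C S) = 0 := v_zero_l _
  have z2 : det2 (dd C S) (dd C S) = 0 := v_zero_l _
  have v1 := v_ww_dd C S hCS
  have v2 := v_dd_ww C S hCS
  have hr3 := r3_pos
  refine ⟨?_, ?_, ?_, ?_, ?_⟩
  · apply int_gt hp (ww C S) (n_ww C S hCS)
    apply tri_sub_ge <;> simp only [det2_add, e1, z1, v1, v2] <;>
      nlinarith [hr3, (Nat.cast_nonneg n : (0:ℝ) ≤ n), (Nat.cast_nonneg m : (0:ℝ) ≤ m)]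
  · apply int_lt hp (ww C S) (n_ww C S hCS)
    apply tri_sub_le <;> simp only [det2_add, e1, z1, v1, v2] <;>
      nlinarith [hr3, (Nat.cast_nonneg n : (0:ℝ) ≤ n), (Nat.cast_nonneg m : (0:ℝ) ≤ m)]
  · apply int_gt hp (dd C S) (n_dd C S hCS)
    apply tri_sub_ge <;> simp only [det2_add, e2, z2, v1, v2] <;>
      nlinarith [hr3, (Nat.cast_nonneg n : (0:ℝ) ≤ n), (Nat.cast_nonneg m : (0:ℝ) ≤ m)]
  · apply int_lt hp (dd C S) (n_dd C S hCS)
    apply tri_sub_le <;> simp only [det2_add, e2, z2, v1, v2] <;>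
      nlinarith [hr3, (Nat.cast_nonneg n : (0:ℝ) ≤ n), (Nat.cast_nonneg m : (0:ℝ) ≤ m)]
  · apply int_lt hp (ww C S + dd C S) (n_wd C S hCS)
    apply tri_sub_le <;> simp only [det2_addl, det2_add, e1, e2, z1, z2, v1, v2] <;>
      nlinarith [hr3]

lemma intB2 (hS : 0 < S) (hCS : C^2 + S^2 = 1) : interior (tileB2 C S n m) ⊆
    {p : Pt | (m:ℝ)*r3 < det2 (ww C S) p ∧ det2 (ww C S) p < ((m:ℝ)+1)*r3 ∧
      -(((n:ℝ)+1)*r3) < det2 (dd C S) p ∧ det2 (dd C S) p < -((n:ℝ)*r3) ∧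
      ((m:ℝ) - n)*r3 < det2 (ww C S + dd C S) p} := by
  intro p hp
  have e1 := vqB_w C S n m hCS
  have e2 := vqB_d C S n m hCS
  have z1 : det2 (ww C S) (ww C S) = 0 := v_zero_l _
  have z2 : det2 (dd C S) (dd C S) = 0 := v_zero_l _
  have v1 := v_ww_dd C S hCS
  have v2 := v_dd_ww C S hCS
  have hr3 := r3_pos
  refine ⟨?_, ?_, ?_, ?_, ?_⟩
  · apply int_gt hp (ww C S) (n_ww C S hCS)
    apply tri_sub_ge <;> simp only [det2_add, e1, z1, v1, v2] <;>
      nlinarith [hr3, (Nat.cast_nonneg n : (0:ℝ) ≤ n), (Nat.cast_nonneg m : (0:ℝ) ≤ m)]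
  · apply int_lt hp (ww C S) (n_ww C S hCS)
    apply tri_sub_le <;> simp only [det2_add, e1, z1, v1, v2] <;>
      nlinarith [hr3, (Nat.cast_nonneg n : (0:ℝ) ≤ n), (Nat.cast_nonneg m : (0:ℝ) ≤ m)]
  · apply int_gt hp (dd C S) (n_dd C S hCS)
    apply tri_sub_ge <;> simp only [det2_add, e2, z2, v1, v2] <;>
      nlinarith [hr3, (Nat.cast_nonneg n : (0:ℝ) ≤ n), (Nat.cast_nonneg m : (0:ℝ) ≤ m)]
  · apply int_lt hp (dd C S) (n_dd C S hCS)
    apply tri_sub_le <;> simp only [det2_add, e2, z2, v1, v2] <;>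
      nlinarith [hr3, (Nat.cast_nonneg n : (0:ℝ) ≤ n), (Nat.cast_nonneg m : (0:ℝ) ≤ m)]
  · apply int_gt hp (ww C S + dd C S) (n_wd C S hCS)
    apply tri_sub_ge <;> simp only [det2_addl, det2_add, e1, e2, z1, z2, v1, v2] <;>
      nlinarith [hr3]

lemma intC (hS : 0 < S) (hCS : C^2 + S^2 = 1) : interior (tileC C S n m) ⊆
    {p : Pt | (m:ℝ)*S < det2 (dd C S) p ∧ det2 (dd C S) p < ((m:ℝ)+1)*S ∧
      -(((n:ℝ)+1)*S) < det2 gg p ∧ det2 gg p < -((n:ℝ)*S)} := by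
  intro p hp
  have e1 := vqC_d C S n m
  have e2 := vqC_g C S n m
  have z1 : det2 (dd C S) (dd C S) = 0 := v_zero_l _
  have z2 : det2 gg gg = 0 := v_zero_l _
  have v1 := v_dd_gg C S
  have v2 := v_gg_dd C S
  refine ⟨?_, ?_, ?_, ?_⟩
  · apply int_gt hp (dd C S) (n_dd C S hCS)
    apply par_sub_ge <;> simp only [det2_add, e1, z1, v1, v2] <;>
      nlinarith [hS, (Nat.cast_nonneg n : (0:ℝ) ≤ n), (Nat.cast_nonneg m : (0:ℝ) ≤ m)]
  · apply int_lt hp (dd C S) (n_dd C S hCS)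
    apply par_sub_le <;> simp only [det2_add, e1, z1, v1, v2] <;>
      nlinarith [hS, (Nat.cast_nonneg n : (0:ℝ) ≤ n), (Nat.cast_nonneg m : (0:ℝ) ≤ m)]
  · apply int_gt hp gg n_gg
    apply par_sub_ge <;> simp only [det2_add, e2, z2, v1, v2] <;>
      nlinarith [hS, (Nat.cast_nonneg n : (0:ℝ) ≤ n), (Nat.cast_nonneg m : (0:ℝ) ≤ m)]
  · apply int_lt hp gg n_gg
    apply par_sub_le <;> simp only [det2_add, e2, z2, v1, v2] <;>
      nlinarith [hS, (Nat.cast_nonneg n : (0:ℝ) ≤ n), (Nat.cast_nonneg m : (0:ℝ) ≤ m)]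

lemma intD1 : interior (tileD1 n m) ⊆
    {p : Pt | (m:ℝ)*r3 < det2 gg p ∧ det2 gg p < ((m:ℝ)+1)*r3 ∧
      -(((n:ℝ)+1)*r3) < det2 uu p ∧ det2 uu p < -((n:ℝ)*r3) ∧
      -(((n:ℝ)+(m:ℝ)+1)*r3) < det2 (uu - gg) p} := by
  intro p hp
  have e1 := vqD_g n m
  have e2 := vqD_u n m
  have z1 : det2 gg gg = 0 := v_zero_l _
  have z2 : det2 uu uu = 0 := v_zero_l _
  have v1 := v_gg_uu
  have v2 := v_uu_gg
  have hr3 := r3_pos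
  refine ⟨?_, ?_, ?_, ?_, ?_⟩
  · apply int_gt hp gg n_gg
    apply tri_sub_ge <;> simp only [det2_add, e1, z1, v1, v2] <;>
      nlinarith [hr3, (Nat.cast_nonneg n : (0:ℝ) ≤ n), (Nat.cast_nonneg m : (0:ℝ) ≤ m)]
  · apply int_lt hp gg n_gg
    apply tri_sub_le <;> simp only [det2_add, e1, z1, v1, v2] <;>
      nlinarith [hr3, (Nat.cast_nonneg n : (0:ℝ) ≤ n), (Nat.cast_nonneg m : (0:ℝ) ≤ m)]
  · apply int_gt hp uu n_uu
    apply tri_sub_ge <;> simp only [det2_add, e2, z2, v1, v2] <;>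
      nlinarith [hr3, (Nat.cast_nonneg n : (0:ℝ) ≤ n), (Nat.cast_nonneg m : (0:ℝ) ≤ m)]
  · apply int_lt hp uu n_uu
    apply tri_sub_le <;> simp only [det2_add, e2, z2, v1, v2] <;>
      nlinarith [hr3, (Nat.cast_nonneg n : (0:ℝ) ≤ n), (Nat.cast_nonneg m : (0:ℝ) ≤ m)]
  · apply int_gt hp (uu - gg) n_ug
    apply tri_sub_ge <;> simp only [det2_subl, det2_add, e1, e2, z1, z2, v1, v2] <;>
      nlinarith [hr3]

lemma intD2 : interior (tileD2 n m) ⊆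
    {p : Pt | (m:ℝ)*r3 < det2 gg p ∧ det2 gg p < ((m:ℝ)+1)*r3 ∧
      -(((n:ℝ)+1)*r3) < det2 uu p ∧ det2 uu p < -((n:ℝ)*r3) ∧
      det2 (uu - gg) p < -(((n:ℝ)+(m:ℝ)+1)*r3)} := by
  intro p hp
  have e1 := vqD_g n m
  have e2 := vqD_u n m
  have z1 : det2 gg gg = 0 := v_zero_l _
  have z2 : det2 uu uu = 0 := v_zero_l _
  have v1 := v_gg_uu
  have v2 := v_uu_gg
  have v3 := v_uu_ee
  have v4 := v_gg_ee
  have hr3 := r3_pos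
  refine ⟨?_, ?_, ?_, ?_, ?_⟩
  · apply int_gt hp gg n_gg
    apply tri_sub_ge <;> simp only [det2_add, e1, z1, v1, v2, v3, v4] <;>
      nlinarith [hr3, (Nat.cast_nonneg n : (0:ℝ) ≤ n), (Nat.cast_nonneg m : (0:ℝ) ≤ m)]
  · apply int_lt hp gg n_gg
    apply tri_sub_le <;> simp only [det2_add, e1, z1, v1, v2, v3, v4] <;>
      nlinarith [hr3, (Nat.cast_nonneg n : (0:ℝ) ≤ n), (Nat.cast_nonneg m : (0:ℝ) ≤ m)]
  · apply int_gt hp uu n_uu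
    apply tri_sub_ge <;> simp only [det2_add, e2, z2, v1, v2, v3, v4] <;>
      nlinarith [hr3, (Nat.cast_nonneg n : (0:ℝ) ≤ n), (Nat.cast_nonneg m : (0:ℝ) ≤ m)]
  · apply int_lt hp uu n_uu
    apply tri_sub_le <;> simp only [det2_add, e2, z2, v1, v2, v3, v4] <;>
      nlinarith [hr3, (Nat.cast_nonneg n : (0:ℝ) ≤ n), (Nat.cast_nonneg m : (0:ℝ) ≤ m)]
  · apply int_lt hp (uu - gg) n_ug
    apply tri_sub_le <;> simp only [det2_subl, det2_add, e1, e2, z1, z2, v1, v2, v3, v4] <;>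
      nlinarith [hr3]

end Bounds2

end S8
namespace S8

section Cover

variable (C S : ℝ)

lemma memA (n m : ℕ) : tileA C S n m ∈ TT C S := by
  left; left; left; left; left; exact ⟨n, m, rfl⟩
lemma memB1 (n m : ℕ) : tileB1 C S n m ∈ TT C S := by
  left; left; left; left; right; exact ⟨n, m, rfl⟩
lemma memB2 (n m : ℕ) : tileB2 C S n m ∈ TT C S := by
  left; left; left; right; exact ⟨n, m, rfl⟩
lemma memC (n m : ℕ) : tileC C S n m ∈ TT C S := by
  left; left; right; exact ⟨n, m, rfl⟩
lemma memD1 (n m : ℕ) : tileD1 n m ∈ TT C S := by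
  left; right; exact ⟨n, m, rfl⟩
lemma memD2 (n m : ℕ) : tileD2 n m ∈ TT C S := by
  right; exact ⟨n, m, rfl⟩

lemma g_eq : gg = uu - ee := by
  apply pt_ext <;> simp [gg, uu, ee] <;> norm_num

lemma cone_decomp (x y p : Pt) (D : ℝ) (hD : det2 x y = D) (hDpos : 0 < D)
    (h1 : 0 ≤ det2 x p) (h2 : det2 y p ≤ 0) :
    ∃ (n m : ℕ) (γ δ : ℝ), 0 ≤ γ ∧ γ ≤ 1 ∧ 0 ≤ δ ∧ δ ≤ 1 ∧
      p = ((n:ℝ) • x + (m:ℝ) • y) + γ • x + δ • y := by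
  have hne : det2 x y ≠ 0 := by rw [hD]; exact ne_of_gt hDpos
  have hrepr := repr2 x y p hne
  set α := -(det2 y p) / det2 x y with hα'
  set β := det2 x p / det2 x y with hβ'
  have hDpos' : 0 < det2 x y := by rw [hD]; exact hDpos
  have hα : 0 ≤ α := div_nonneg (by linarith) (le_of_lt hDpos')
  have hβ : 0 ≤ β := div_nonneg h1 (le_of_lt hDpos')
  refine ⟨⌊α⌋₊, ⌊β⌋₊, α - ⌊α⌋₊, β - ⌊β⌋₊, ?_, ?_, ?_, ?_, ?_⟩
  · have := Nat.floor_le hα; linarith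
  · have := Nat.lt_floor_add_one α; linarith
  · have := Nat.floor_le hβ; linarith
  · have := Nat.lt_floor_add_one β; linarith
  · have hgoal : ((⌊α⌋₊:ℝ) • x + (⌊β⌋₊:ℝ) • y) + (α - ⌊α⌋₊) • x + (β - ⌊β⌋₊) • y
        = α • x + β • y := by module
    rw [hgoal]
    exact hrepr

lemma cover (hS : 0 < S) (hCS : C^2 + S^2 = 1) (p : Pt) : ∃ t ∈ TT C S, p ∈ t := by
  set su := det2 uu p with hsu
  set sw := det2 (ww C S) p with hsw
  set sd := det2 (dd C S) p with hsd
  set sg := det2 gg p with hsg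
  have hr3 := r3_pos
  have hId3 := id3 C S p
  have hId4 := id4 C S hCS p
  -- cone 1 : A tiles
  have cone1 : 0 ≤ su → sw ≤ 0 → ∃ t ∈ TT C S, p ∈ t := by
    intro h1 h2
    obtain ⟨n, m, γ, δ, hγ0, hγ1, hδ0, hδ1, hp⟩ :=
      cone_decomp uu (ww C S) p S (v_uu_ww C S) hS h1 h2
    refine ⟨tileA C S n m, memA C S n m, ?_⟩
    rw [hp]
    exact mem_par _ _ _ hγ0 hγ1 hδ0 hδ1
  -- cone 2 : B tiles
  have cone2 : 0 ≤ sw → sd ≤ 0 → ∃ t ∈ TT C S, p ∈ t := by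
    intro h1 h2
    obtain ⟨n, m, γ, δ, hγ0, hγ1, hδ0, hδ1, hp⟩ :=
      cone_decomp (ww C S) (dd C S) p r3 (v_ww_dd C S hCS) hr3 h1 h2
    rcases le_or_gt δ γ with hc | hc
    · refine ⟨tileB1 C S n m, memB1 C S n m, ?_⟩
      have hre : ((n:ℝ) • ww C S + (m:ℝ) • dd C S) + γ • ww C S + δ • dd C S
          = qB C S n m + (γ - δ) • ww C S + δ • (ww C S + dd C S) := by
        rw [qB]; module
      rw [hp, hre]
      exact mem_tri _ _ _ (by linarith) hδ0 (by linarith)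
    · refine ⟨tileB2 C S n m, memB2 C S n m, ?_⟩
      have hre : ((n:ℝ) • ww C S + (m:ℝ) • dd C S) + γ • ww C S + δ • dd C S
          = qB C S n m + (δ - γ) • dd C S + γ • (ww C S + dd C S) := by
        rw [qB]; module
      rw [hp, hre]
      exact mem_tri _ _ _ (by linarith) hγ0 (by linarith)
  -- cone 3 : C tiles
  have cone3 : 0 ≤ sd → sg ≤ 0 → ∃ t ∈ TT C S, p ∈ t := by
    intro h1 h2
    obtain ⟨n, m, γ, δ, hγ0, hγ1, hδ0, hδ1, hp⟩ :=
      cone_decomp (dd C S) gg p S (v_dd_gg C S) hS h1 h2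
    refine ⟨tileC C S n m, memC C S n m, ?_⟩
    have hre : ((n:ℝ) • dd C S + (m:ℝ) • gg) + γ • dd C S + δ • gg
        = qC C S n m + γ • dd C S + δ • gg := by rw [qC]
    rw [hp, hre]
    exact mem_par _ _ _ hγ0 hγ1 hδ0 hδ1
  -- cone 4 : D tiles
  have cone4 : 0 ≤ sg → su ≤ 0 → ∃ t ∈ TT C S, p ∈ t := by
    intro h1 h2
    obtain ⟨n, m, γ, δ, hγ0, hγ1, hδ0, hδ1, hp⟩ :=
      cone_decomp gg uu p r3 v_gg_uu hr3 h1 h2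
    rcases le_or_gt (γ + δ) 1 with hc | hc
    · refine ⟨tileD1 n m, memD1 C S n m, ?_⟩
      have hre : ((n:ℝ) • gg + (m:ℝ) • uu) + γ • gg + δ • uu
          = qD n m + γ • gg + δ • uu := by rw [qD]
      rw [hp, hre]
      exact mem_tri _ _ _ hγ0 hδ0 hc
    · refine ⟨tileD2 n m, memD2 C S n m, ?_⟩
      have hre : ((n:ℝ) • gg + (m:ℝ) • uu) + γ • gg + δ • uu
          = (qD n m + gg) + (γ + δ - 1) • uu + (1 - γ) • ee := by
        rw [qD, g_eq]; module
      rw [hp, hre]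
      exact mem_tri _ _ _ (by linarith) (by linarith) (by linarith)
  -- case analysis
  rcases le_or_gt 0 su with h1 | h1
  · rcases le_or_gt sw 0 with h2 | h2
    · exact cone1 h1 h2
    · rcases le_or_gt sd 0 with h3 | h3
      · exact cone2 (le_of_lt h2) h3
      · rcases le_or_gt sg 0 with h4 | h4
        · exact cone3 (le_of_lt h3) h4
        · exfalso
          -- all positive-ish : contradiction
          have hb2su : 0 < b2v C S * su := by nlinarith [hId3, hr3, hS]
          have hb2 : 0 < b2v C S := by
            rcases lt_trichotomy (b2v C S) 0 with h | h | h
            · nlinarith [hb2su]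
            · rw [h] at hb2su; nlinarith [hb2su]
            · exact h
          nlinarith [hId4, hr3, hS, mul_pos hb2 h3]
  · rcases le_or_gt 0 sg with h2 | h2
    · exact cone4 h2 (le_of_lt h1)
    · rcases le_or_gt 0 sd with h3 | h3
      · exact cone3 h3 (le_of_lt h2)
      · rcases le_or_gt 0 sw with h4 | h4
        · exact cone2 h4 (le_of_lt h3)
        · exfalso
          have hb2su : b2v C S * su < 0 := by nlinarith [hId3, hr3, hS]
          have hb2 : 0 < b2v C S := by
            rcases lt_trichotomy (b2v C S) 0 with h | h | h
            · nlinarith [hb2su]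
            · rw [h] at hb2su; nlinarith [hb2su]
            · exact h
          nlinarith [hId4, hr3, hS, mul_pos hb2 (neg_pos.mpr h3)]

end Cover

end S8
namespace S8

lemma idx_disj {c : ℝ} (hc : 0 < c) {n n' : ℕ} {x : ℝ} (h1 : (n:ℝ)*c < x)
    (h2 : x < ((n:ℝ)+1)*c) (h3 : (n':ℝ)*c < x) (h4 : x < ((n':ℝ)+1)*c) : n = n' := by
  by_contra hne
  rcases lt_or_gt_of_ne hne with h | h
  · have hle : ((n:ℝ)+1) ≤ (n':ℝ) := by exact_mod_cast Nat.succ_le_of_lt h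
    nlinarith
  · have hle : ((n':ℝ)+1) ≤ (n:ℝ) := by exact_mod_cast Nat.succ_le_of_lt h
    nlinarith

lemma idx_disj_neg {c : ℝ} (hc : 0 < c) {n n' : ℕ} {x : ℝ} (h1 : -(((n:ℝ)+1)*c) < x)
    (h2 : x < -((n:ℝ)*c)) (h3 : -(((n':ℝ)+1)*c) < x) (h4 : x < -((n':ℝ)*c)) : n = n' := by
  refine idx_disj hc (x := -x) (by linarith) (by linarith) (by linarith) (by linarith)

section Disj

variable (C S : ℝ)

/-- cone 1 and cone 3 have disjoint interiors -/
lemma noAC (hS : 0 < S) (hCS : C^2 + S^2 = 1) {p : Pt}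
    (h1 : 0 < det2 uu p) (h2 : det2 (ww C S) p < 0)
    (h3 : 0 < det2 (dd C S) p) (h4 : det2 gg p < 0) : False := by
  have i1 := id1 C S hCS p
  have i2 := id2 C S p
  have hr3 := r3_pos
  rcases le_or_gt 0 (d2v C S) with h | h
  · nlinarith [mul_nonneg h (le_of_lt (neg_pos.mpr h2)), mul_pos hr3 h1, mul_pos hS h3]
  · nlinarith [mul_pos (neg_pos.mpr h) (neg_pos.mpr h4), mul_pos hr3 h3, mul_pos hS h1]

/-- cone 2 and cone 4 have disjoint interiors -/
lemma noBD (hS : 0 < S) (hCS : C^2 + S^2 = 1) {p : Pt}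
    (h1 : 0 < det2 (ww C S) p) (h2 : det2 (dd C S) p < 0)
    (h3 : 0 < det2 gg p) (h4 : det2 uu p < 0) : False := by
  have i3 := id3 C S p
  have i4 := id4 C S hCS p
  have hr3 := r3_pos
  rcases le_or_gt 0 (b2v C S) with h | h
  · nlinarith [mul_nonneg h (le_of_lt (neg_pos.mpr h4)), mul_pos hr3 h1, mul_pos hS h3]
  · nlinarith [mul_pos (neg_pos.mpr h) (neg_pos.mpr h2), mul_pos hr3 h3, mul_pos hS h1]

set_option maxHeartbeats 3000000 in
theorem disj (hS : 0 < S) (hCS : C^2 + S^2 = 1) :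
    ∀ t ∈ TT C S, ∀ s ∈ TT C S, t ≠ s → interior t ∩ interior s = ∅ := by
  intro t ht s hs hne
  rw [eq_empty_iff_forall_notMem]
  rintro p ⟨hpt, hps⟩
  have hr3 := r3_pos
  have hmn : ∀ k : ℕ, (0:ℝ) ≤ k := fun k => Nat.cast_nonneg k
  rcases ht with ((((⟨n,m,rfl⟩ | ⟨n,m,rfl⟩) | ⟨n,m,rfl⟩) | ⟨n,m,rfl⟩) | ⟨n,m,rfl⟩) | ⟨n,m,rfl⟩ <;>
    rcases hs with ((((⟨n',m',rfl⟩ | ⟨n',m',rfl⟩) | ⟨n',m',rfl⟩) | ⟨n',m',rfl⟩) | ⟨n',m',rfl⟩) | ⟨n',m',rfl⟩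
  -- A vs A
  · obtain ⟨a1, a2, a3, a4⟩ := intA C S n m hS hCS hpt
    obtain ⟨b1, b2, b3, b4⟩ := intA C S n' m' hS hCS hps
    have hn : n = n' := idx_disj_neg hS a3 a4 b3 b4
    have hm : m = m' := idx_disj hS a1 a2 b1 b2
    exact hne (by rw [hn, hm])
  -- A vs B1
  · obtain ⟨a1, a2, a3, a4⟩ := intA C S n m hS hCS hpt
    obtain ⟨b1, b2, b3, b4, b5⟩ := intB1 C S n' m' hS hCS hps
    nlinarith [hmn n, hmn m']
  -- A vs B2
  · obtain ⟨a1, a2, a3, a4⟩ := intA C S n m hS hCS hpt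
    obtain ⟨b1, b2, b3, b4, b5⟩ := intB2 C S n' m' hS hCS hps
    nlinarith [hmn n, hmn m']
  -- A vs C
  · obtain ⟨a1, a2, a3, a4⟩ := intA C S n m hS hCS hpt
    obtain ⟨b1, b2, b3, b4⟩ := intC C S n' m' hS hCS hps
    refine noAC C S hS hCS (p := p) ?_ ?_ ?_ ?_ <;> nlinarith [hmn n, hmn m, hmn n', hmn m']
  -- A vs D1
  · obtain ⟨a1, a2, a3, a4⟩ := intA C S n m hS hCS hpt
    obtain ⟨b1, b2, b3, b4, b5⟩ := intD1 n' m' hps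
    nlinarith [hmn m, hmn n']
  -- A vs D2
  · obtain ⟨a1, a2, a3, a4⟩ := intA C S n m hS hCS hpt
    obtain ⟨b1, b2, b3, b4, b5⟩ := intD2 n' m' hps
    nlinarith [hmn m, hmn n']
  -- B1 vs A
  · obtain ⟨a1, a2, a3, a4, a5⟩ := intB1 C S n m hS hCS hpt
    obtain ⟨b1, b2, b3, b4⟩ := intA C S n' m' hS hCS hps
    nlinarith [hmn n', hmn m]
  -- B1 vs B1
  · obtain ⟨a1, a2, a3, a4, a5⟩ := intB1 C S n m hS hCS hpt
    obtain ⟨b1, b2, b3, b4, b5⟩ := intB1 C S n' m' hS hCS hps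
    have hn : n = n' := idx_disj_neg hr3 a3 a4 b3 b4
    have hm : m = m' := idx_disj hr3 a1 a2 b1 b2
    exact hne (by rw [hn, hm])
  -- B1 vs B2
  · obtain ⟨a1, a2, a3, a4, a5⟩ := intB1 C S n m hS hCS hpt
    obtain ⟨b1, b2, b3, b4, b5⟩ := intB2 C S n' m' hS hCS hps
    have hn : n = n' := idx_disj_neg hr3 a3 a4 b3 b4
    have hm : m = m' := idx_disj hr3 a1 a2 b1 b2
    rw [hn, hm] at a5
    linarith
  -- B1 vs C
  · obtain ⟨a1, a2, a3, a4, a5⟩ := intB1 C S n m hS hCS hpt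
    obtain ⟨b1, b2, b3, b4⟩ := intC C S n' m' hS hCS hps
    nlinarith [hmn n, hmn m']
  -- B1 vs D1
  · obtain ⟨a1, a2, a3, a4, a5⟩ := intB1 C S n m hS hCS hpt
    obtain ⟨b1, b2, b3, b4, b5⟩ := intD1 n' m' hps
    refine noBD C S hS hCS (p := p) ?_ ?_ ?_ ?_ <;> nlinarith [hmn n, hmn m, hmn n', hmn m']
  -- B1 vs D2
  · obtain ⟨a1, a2, a3, a4, a5⟩ := intB1 C S n m hS hCS hpt
    obtain ⟨b1, b2, b3, b4, b5⟩ := intD2 n' m' hps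
    refine noBD C S hS hCS (p := p) ?_ ?_ ?_ ?_ <;> nlinarith [hmn n, hmn m, hmn n', hmn m']
  -- B2 vs A
  · obtain ⟨a1, a2, a3, a4, a5⟩ := intB2 C S n m hS hCS hpt
    obtain ⟨b1, b2, b3, b4⟩ := intA C S n' m' hS hCS hps
    nlinarith [hmn n', hmn m]
  -- B2 vs B1
  · obtain ⟨a1, a2, a3, a4, a5⟩ := intB2 C S n m hS hCS hpt
    obtain ⟨b1, b2, b3, b4, b5⟩ := intB1 C S n' m' hS hCS hps
    have hn : n = n' := idx_disj_neg hr3 a3 a4 b3 b4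
    have hm : m = m' := idx_disj hr3 a1 a2 b1 b2
    rw [hn, hm] at a5
    linarith
  -- B2 vs B2
  · obtain ⟨a1, a2, a3, a4, a5⟩ := intB2 C S n m hS hCS hpt
    obtain ⟨b1, b2, b3, b4, b5⟩ := intB2 C S n' m' hS hCS hps
    have hn : n = n' := idx_disj_neg hr3 a3 a4 b3 b4
    have hm : m = m' := idx_disj hr3 a1 a2 b1 b2
    exact hne (by rw [hn, hm])
  -- B2 vs C
  · obtain ⟨a1, a2, a3, a4, a5⟩ := intB2 C S n m hS hCS hpt
    obtain ⟨b1, b2, b3, b4⟩ := intC C S n' m' hS hCS hps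
    nlinarith [hmn n, hmn m']
  -- B2 vs D1
  · obtain ⟨a1, a2, a3, a4, a5⟩ := intB2 C S n m hS hCS hpt
    obtain ⟨b1, b2, b3, b4, b5⟩ := intD1 n' m' hps
    refine noBD C S hS hCS (p := p) ?_ ?_ ?_ ?_ <;> nlinarith [hmn n, hmn m, hmn n', hmn m']
  -- B2 vs D2
  · obtain ⟨a1, a2, a3, a4, a5⟩ := intB2 C S n m hS hCS hpt
    obtain ⟨b1, b2, b3, b4, b5⟩ := intD2 n' m' hps
    refine noBD C S hS hCS (p := p) ?_ ?_ ?_ ?_ <;> nlinarith [hmn n, hmn m, hmn n', hmn m']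
  -- C vs A
  · obtain ⟨a1, a2, a3, a4⟩ := intC C S n m hS hCS hpt
    obtain ⟨b1, b2, b3, b4⟩ := intA C S n' m' hS hCS hps
    refine noAC C S hS hCS (p := p) ?_ ?_ ?_ ?_ <;> nlinarith [hmn n, hmn m, hmn n', hmn m']
  -- C vs B1
  · obtain ⟨a1, a2, a3, a4⟩ := intC C S n m hS hCS hpt
    obtain ⟨b1, b2, b3, b4, b5⟩ := intB1 C S n' m' hS hCS hps
    nlinarith [hmn n', hmn m]
  -- C vs B2
  · obtain ⟨a1, a2, a3, a4⟩ := intC C S n m hS hCS hpt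
    obtain ⟨b1, b2, b3, b4, b5⟩ := intB2 C S n' m' hS hCS hps
    nlinarith [hmn n', hmn m]
  -- C vs C
  · obtain ⟨a1, a2, a3, a4⟩ := intC C S n m hS hCS hpt
    obtain ⟨b1, b2, b3, b4⟩ := intC C S n' m' hS hCS hps
    have hn : n = n' := idx_disj_neg hS a3 a4 b3 b4
    have hm : m = m' := idx_disj hS a1 a2 b1 b2
    exact hne (by rw [hn, hm])
  -- C vs D1
  · obtain ⟨a1, a2, a3, a4⟩ := intC C S n m hS hCS hpt
    obtain ⟨b1, b2, b3, b4, b5⟩ := intD1 n' m' hps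
    nlinarith [hmn n, hmn m']
  -- C vs D2
  · obtain ⟨a1, a2, a3, a4⟩ := intC C S n m hS hCS hpt
    obtain ⟨b1, b2, b3, b4, b5⟩ := intD2 n' m' hps
    nlinarith [hmn n, hmn m']
  -- D1 vs A
  · obtain ⟨a1, a2, a3, a4, a5⟩ := intD1 n m hpt
    obtain ⟨b1, b2, b3, b4⟩ := intA C S n' m' hS hCS hps
    nlinarith [hmn n, hmn m']
  -- D1 vs B1
  · obtain ⟨a1, a2, a3, a4, a5⟩ := intD1 n m hpt
    obtain ⟨b1, b2, b3, b4, b5⟩ := intB1 C S n' m' hS hCS hps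
    refine noBD C S hS hCS (p := p) ?_ ?_ ?_ ?_ <;> nlinarith [hmn n, hmn m, hmn n', hmn m']
  -- D1 vs B2
  · obtain ⟨a1, a2, a3, a4, a5⟩ := intD1 n m hpt
    obtain ⟨b1, b2, b3, b4, b5⟩ := intB2 C S n' m' hS hCS hps
    refine noBD C S hS hCS (p := p) ?_ ?_ ?_ ?_ <;> nlinarith [hmn n, hmn m, hmn n', hmn m']
  -- D1 vs C
  · obtain ⟨a1, a2, a3, a4, a5⟩ := intD1 n m hpt
    obtain ⟨b1, b2, b3, b4⟩ := intC C S n' m' hS hCS hps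
    nlinarith [hmn n', hmn m]
  -- D1 vs D1
  · obtain ⟨a1, a2, a3, a4, a5⟩ := intD1 n m hpt
    obtain ⟨b1, b2, b3, b4, b5⟩ := intD1 n' m' hps
    have hn : n = n' := idx_disj_neg hr3 a3 a4 b3 b4
    have hm : m = m' := idx_disj hr3 a1 a2 b1 b2
    exact hne (by rw [hn, hm])
  -- D1 vs D2
  · obtain ⟨a1, a2, a3, a4, a5⟩ := intD1 n m hpt
    obtain ⟨b1, b2, b3, b4, b5⟩ := intD2 n' m' hps
    have hn : n = n' := idx_disj_neg hr3 a3 a4 b3 b4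
    have hm : m = m' := idx_disj hr3 a1 a2 b1 b2
    rw [hn, hm] at a5
    linarith
  -- D2 vs A
  · obtain ⟨a1, a2, a3, a4, a5⟩ := intD2 n m hpt
    obtain ⟨b1, b2, b3, b4⟩ := intA C S n' m' hS hCS hps
    nlinarith [hmn n, hmn m']
  -- D2 vs B1
  · obtain ⟨a1, a2, a3, a4, a5⟩ := intD2 n m hpt
    obtain ⟨b1, b2, b3, b4, b5⟩ := intB1 C S n' m' hS hCS hps
    refine noBD C S hS hCS (p := p) ?_ ?_ ?_ ?_ <;> nlinarith [hmn n, hmn m, hmn n', hmn m']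
  -- D2 vs B2
  · obtain ⟨a1, a2, a3, a4, a5⟩ := intD2 n m hpt
    obtain ⟨b1, b2, b3, b4, b5⟩ := intB2 C S n' m' hS hCS hps
    refine noBD C S hS hCS (p := p) ?_ ?_ ?_ ?_ <;> nlinarith [hmn n, hmn m, hmn n', hmn m']
  -- D2 vs C
  · obtain ⟨a1, a2, a3, a4, a5⟩ := intD2 n m hpt
    obtain ⟨b1, b2, b3, b4⟩ := intC C S n' m' hS hCS hps
    nlinarith [hmn n', hmn m]
  -- D2 vs D1
  · obtain ⟨a1, a2, a3, a4, a5⟩ := intD2 n m hpt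
    obtain ⟨b1, b2, b3, b4, b5⟩ := intD1 n' m' hps
    have hn : n = n' := idx_disj_neg hr3 a3 a4 b3 b4
    have hm : m = m' := idx_disj hr3 a1 a2 b1 b2
    rw [hn, hm] at a5
    linarith
  -- D2 vs D2
  · obtain ⟨a1, a2, a3, a4, a5⟩ := intD2 n m hpt
    obtain ⟨b1, b2, b3, b4, b5⟩ := intD2 n' m' hps
    have hn : n = n' := idx_disj_neg hr3 a3 a4 b3 b4
    have hm : m = m' := idx_disj hr3 a1 a2 b1 b2
    exact hne (by rw [hn, hm])

end Disj

end S8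
namespace S8

lemma dist_eq' (p q : Pt) : dist p q = Real.sqrt ((p 0 - q 0)^2 + (p 1 - q 1)^2) := by
  rw [EuclideanSpace.dist_eq, Fin.sum_univ_two]
  simp [Real.dist_eq, sq_abs]

lemma sq_le_of_dist {p q : Pt} (h : dist p q ≤ 1) :
    (p 0 - q 0)^2 + (p 1 - q 1)^2 ≤ 1 := by
  have h2 := dist_eq' p q
  have hnn : (0:ℝ) ≤ (p 0 - q 0)^2 + (p 1 - q 1)^2 := by positivity
  nlinarith [Real.sq_sqrt hnn, Real.sqrt_nonneg ((p 0 - q 0)^2 + (p 1 - q 1)^2)]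

lemma pt_add_pt (a b c d : ℝ) : pt a b + pt c d = pt (a+c) (b+d) := by
  apply pt_ext <;> simp

lemma norm_le_one (a b : ℝ) (h : a^2 + b^2 = 1) : ‖pt a b‖ ≤ 1 := by
  rw [norm_pt, h, Real.sqrt_one]

section Classify

variable (C S : ℝ)

lemma mem_par_self (q x y : Pt) : q ∈ par q x y :=
  subset_convexHull ℝ _ (by simp)
lemma mem_par_x (q x y : Pt) : q + x ∈ par q x y :=
  subset_convexHull ℝ _ (by simp)
lemma mem_par_y (q x y : Pt) : q + y ∈ par q x y :=
  subset_convexHull ℝ _ (by simp)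
lemma mem_par_xy (q x y : Pt) : q + x + y ∈ par q x y :=
  subset_convexHull ℝ _ (by simp)
lemma mem_tri_self (q x y : Pt) : q ∈ tri q x y :=
  subset_convexHull ℝ _ (by simp)
lemma mem_tri_x (q x y : Pt) : q + x ∈ tri q x y :=
  subset_convexHull ℝ _ (by simp)
lemma mem_tri_y (q x y : Pt) : q + y ∈ tri q x y :=
  subset_convexHull ℝ _ (by simp)

/-- a translate of the rhombus cannot be a triangle tile -/
lemma rhombus_ne_tri (hS : 0 < S) (hCS : C^2 + S^2 = 1) (z : Pt) {q x y : Pt}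
    (hx : ‖x‖ ≤ 1) (hy : ‖y‖ ≤ 1) (hxy : ‖x - y‖ ≤ 1)
    (hEq : par z uu (ww C S) = tri q x y) : False := by
  have m1 : z ∈ tri q x y := hEq ▸ mem_par_self z uu (ww C S)
  have m2 : z + uu + ww C S ∈ tri q x y := hEq ▸ mem_par_xy z uu (ww C S)
  have m3 : z + uu ∈ tri q x y := hEq ▸ mem_par_x z uu (ww C S)
  have m4 : z + ww C S ∈ tri q x y := hEq ▸ mem_par_y z uu (ww C S)
  have d1 : dist z (z + uu + ww C S) ≤ 1 := tri_diam hx hy hxy m1 m2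
  have d2 : dist (z + uu) (z + ww C S) ≤ 1 := tri_diam hx hy hxy m3 m4
  have s1 := sq_le_of_dist d1
  have s2 := sq_le_of_dist d2
  simp only [add_apply, uu, ww, pt0, pt1] at s1 s2
  nlinarith [s1, s2, hCS]

-- norm facts for the triangle tiles
lemma nrm_ww (hCS : C^2 + S^2 = 1) : ‖ww C S‖ ≤ 1 := norm_le_one C S hCS
lemma nrm_dd (hCS : C^2 + S^2 = 1) : ‖dd C S‖ ≤ 1 := by
  rw [dd]
  apply norm_le_one
  nlinarith [r3_sq, hCS]
lemma nrm_wd (hCS : C^2 + S^2 = 1) : ‖ww C S + dd C S‖ ≤ 1 := by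
  rw [ww, dd, pt_add_pt]
  apply norm_le_one
  nlinarith [r3_sq, hCS]
lemma nrm_uu : ‖uu‖ ≤ 1 := by
  rw [uu]; apply norm_le_one; norm_num
lemma nrm_gg : ‖gg‖ ≤ 1 := by
  rw [gg]; apply norm_le_one; nlinarith [r3_sq]
lemma nrm_ee : ‖ee‖ ≤ 1 := by
  rw [ee]; apply norm_le_one; nlinarith [r3_sq]
lemma nrm_w_sub_wd (hCS : C^2 + S^2 = 1) : ‖ww C S - (ww C S + dd C S)‖ ≤ 1 := by
  have h : ww C S - (ww C S + dd C S) = pt (-(dd C S 0)) (-(dd C S 1)) := by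
    apply pt_ext <;> simp
  rw [h, dd]
  apply norm_le_one
  simp only [pt0, pt1]
  nlinarith [r3_sq, hCS]
lemma nrm_d_sub_wd (hCS : C^2 + S^2 = 1) : ‖dd C S - (ww C S + dd C S)‖ ≤ 1 := by
  have h : dd C S - (ww C S + dd C S) = pt (-C) (-S) := by
    apply pt_ext <;> simp [ww] <;> ring
  rw [h]
  apply norm_le_one
  nlinarith [hCS]
lemma nrm_g_sub_u : ‖gg - uu‖ ≤ 1 := by
  have h : gg - uu = pt (-(1/2)) (-r3) := by
    apply pt_ext <;> simp [gg, uu] <;> ring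
  rw [h]
  apply norm_le_one
  nlinarith [r3_sq]
lemma nrm_u_sub_e : ‖uu - ee‖ ≤ 1 := by
  have h : uu - ee = pt (1/2) (-r3) := by
    apply pt_ext <;> simp [gg, uu, ee] <;> ring
  rw [h]
  apply norm_le_one
  nlinarith [r3_sq]

/-- the width contradiction : a translate of the rhombus cannot be a C-tile -/
lemma rhombus_ne_C (hS : 0 < S) (hCS : C^2 + S^2 = 1) (z : Pt) (n m : ℕ)
    (hEq : par z uu (ww C S) = tileC C S n m) : False := by
  have hr3 := r3_pos
  set q : Pt := qC C S n m with hq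
  -- memberships of extreme vertices
  have mz : z ∈ tileC C S n m := hEq ▸ mem_par_self z uu (ww C S)
  have mzw : z + ww C S ∈ tileC C S n m := hEq ▸ mem_par_y z uu (ww C S)
  have mzu : z + uu ∈ tileC C S n m := hEq ▸ mem_par_x z uu (ww C S)
  have mq : q ∈ par z uu (ww C S) := hEq ▸ mem_par_self q (dd C S) gg
  have mqd : q + dd C S ∈ par z uu (ww C S) := hEq ▸ mem_par_x q (dd C S) gg
  have mqg : q + gg ∈ par z uu (ww C S) := hEq ▸ mem_par_y q (dd C S) gg
  have mqdg : q + dd C S + gg ∈ par z uu (ww C S) := hEq ▸ mem_par_xy q (dd C S) gg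
  -- functional values
  have vud := v_uu_dd C S
  have vug := v_uu_gg
  have vwd := v_ww_dd C S hCS
  have vwg := v_ww_gg C S
  have vuw := v_uu_ww C S
  have z_uu : det2 uu (ww C S) = S := vuw
  -- LHS halfspace bounds
  have L_le_u : par z uu (ww C S) ⊆ {p : Pt | det2 uu p ≤ det2 uu z + S} := by
    apply par_sub_le <;> (try simp only [det2_add, v_zero_l, vuw]) <;> linarith
  have L_ge_u : par z uu (ww C S) ⊆ {p : Pt | det2 uu z ≤ det2 uu p} := by
    apply par_sub_ge <;> (try simp only [det2_add, v_zero_l, vuw]) <;> linarith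
  have L_le_w : par z uu (ww C S) ⊆ {p : Pt | det2 (ww C S) p ≤ det2 (ww C S) z} := by
    apply par_sub_le <;> (try simp only [det2_add, v_zero_l, v_ww_uu]) <;> linarith
  have L_ge_w : par z uu (ww C S) ⊆ {p : Pt | det2 (ww C S) z - S ≤ det2 (ww C S) p} := by
    apply par_sub_ge <;> (try simp only [det2_add, v_zero_l, v_ww_uu]) <;> linarith
  -- u-width equation
  have hu : (S - r3)^2 = (d2v C S)^2 := by
    rcases le_or_gt 0 (d2v C S) with hd | hd
    · -- max at q + dd , min at q + gg
      have R_le : tileC C S n m ⊆ {p : Pt | det2 uu p ≤ det2 uu q + d2v C S} := by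
        apply par_sub_le <;> (try simp only [det2_add, v_zero_l, vud, vug]) <;> linarith
      have R_ge : tileC C S n m ⊆ {p : Pt | det2 uu q - r3 ≤ det2 uu p} := by
        apply par_sub_ge <;> (try simp only [det2_add, v_zero_l, vud, vug]) <;> linarith
      have e1 : det2 uu (z + ww C S) ≤ det2 uu q + d2v C S := R_le mzw
      have e2 : det2 uu (q + dd C S) ≤ det2 uu z + S := L_le_u mqd
      have e3 : det2 uu q - r3 ≤ det2 uu z := R_ge mz
      have e4 : det2 uu (q + gg) ≥ det2 uu z := L_ge_u mqg
      rw [det2_add, vuw] at e1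
      rw [det2_add, vud] at e2
      rw [det2_add, vug] at e4
      have : S - r3 = d2v C S := by linarith
      rw [this]
    · -- max at q , min at q + dd + gg
      have R_le : tileC C S n m ⊆ {p : Pt | det2 uu p ≤ det2 uu q} := by
        apply par_sub_le <;> (try simp only [det2_add, v_zero_l, vud, vug]) <;> linarith
      have R_ge : tileC C S n m ⊆ {p : Pt | det2 uu q + d2v C S - r3 ≤ det2 uu p} := by
        apply par_sub_ge <;> (try simp only [det2_add, v_zero_l, vud, vug]) <;> linarith
      have e1 : det2 uu (z + ww C S) ≤ det2 uu q := R_le mzw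
      have e2 : det2 uu q ≤ det2 uu z + S := L_le_u mq
      have e3 : det2 uu q + d2v C S - r3 ≤ det2 uu z := R_ge mz
      have e4 : det2 uu (q + dd C S + gg) ≥ det2 uu z := L_ge_u mqdg
      rw [det2_add, vuw] at e1
      rw [det2_add, det2_add, vud, vug] at e4
      have : S - r3 = -(d2v C S) := by linarith
      rw [this]
      ring
  -- w-width equation
  have hw : (S - r3)^2 = (b2v C S)^2 := by
    rcases le_or_gt 0 (b2v C S) with hb | hb
    · -- for ww functional : max at q + dd, min at q + gg
      have R_le : tileC C S n m ⊆ {p : Pt | det2 (ww C S) p ≤ det2 (ww C S) q + r3} := by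
        apply par_sub_le <;> (try simp only [det2_add, v_zero_l, vwd, vwg]) <;> linarith
      have R_ge : tileC C S n m ⊆ {p : Pt | det2 (ww C S) q - b2v C S ≤ det2 (ww C S) p} := by
        apply par_sub_ge <;> (try simp only [det2_add, v_zero_l, vwd, vwg]) <;> linarith
      have e1 : det2 (ww C S) (q + dd C S) ≤ det2 (ww C S) z := L_le_w mqd
      have e2 : det2 (ww C S) z ≤ det2 (ww C S) q + r3 := R_le mz
      have e3 : det2 (ww C S) z - S ≤ det2 (ww C S) (q + gg) := L_ge_w mqg
      have e4 : det2 (ww C S) (z + uu) ≥ det2 (ww C S) q - b2v C S := R_ge mzu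
      rw [det2_add, vwd] at e1
      rw [det2_add, vwg] at e3
      rw [det2_add, v_ww_uu] at e4
      have : S - r3 = b2v C S := by linarith
      rw [this]
    · have R_le : tileC C S n m ⊆
          {p : Pt | det2 (ww C S) p ≤ det2 (ww C S) q + r3 - b2v C S} := by
        apply par_sub_le <;> (try simp only [det2_add, v_zero_l, vwd, vwg]) <;> linarith
      have R_ge : tileC C S n m ⊆ {p : Pt | det2 (ww C S) q ≤ det2 (ww C S) p} := by
        apply par_sub_ge <;> (try simp only [det2_add, v_zero_l, vwd, vwg]) <;> linarith
      have e1 : det2 (ww C S) (q + dd C S + gg) ≤ det2 (ww C S) z := L_le_w mqdg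
      have e2 : det2 (ww C S) z ≤ det2 (ww C S) q + r3 - b2v C S := R_le mz
      have e3 : det2 (ww C S) z - S ≤ det2 (ww C S) q := L_ge_w mq
      have e4 : det2 (ww C S) (z + uu) ≥ det2 (ww C S) q := R_ge mzu
      rw [det2_add, det2_add, vwd, vwg] at e1
      rw [det2_add, v_ww_uu] at e4
      have : S - r3 = -(b2v C S) := by linarith
      rw [this]
      ring
  -- final contradiction
  have hdb : (d2v C S)^2 - (b2v C S)^2 = -(2*r3*S)*C := by
    simp only [d2v, b2v]; ring
  have hC0 : C = 0 := by
    have h3 : (d2v C S)^2 = (b2v C S)^2 := by rw [← hu, hw]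
    have h4 : (-(2*r3*S))*C = 0 := by linarith
    rcases mul_eq_zero.mp h4 with h5 | h5
    · exfalso; nlinarith [hr3, hS]
    · exact h5
  rw [hC0] at hCS hu
  have hS1 : S = 1 := by nlinarith
  rw [hS1] at hu
  simp only [d2v, hC0] at hu
  nlinarith [r3_sq, hr3]

end Classify

end S8
namespace S8

section Classify2

variable (C S : ℝ)

lemma v_u_coord (p : Pt) : det2 uu p = p 1 := by simp [det2, uu]
lemma v_w_coord (p : Pt) : det2 (ww C S) p = C * p 1 - S * p 0 := by simp [det2, ww]

/-- translates of the rhombus in the same position-class are equal only for equal offsets -/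
lemma par_inj (hS : 0 < S) (z z' : Pt) (h : par z uu (ww C S) = par z' uu (ww C S)) :
    z = z' := by
  have vuw := v_uu_ww C S
  have bnd : ∀ y : Pt, par y uu (ww C S) ⊆ {p : Pt | det2 uu y ≤ det2 uu p} := by
    intro y
    apply par_sub_ge <;> (try simp only [det2_add, v_zero_l, vuw]) <;> linarith
  have bnd2 : ∀ y : Pt, par y uu (ww C S) ⊆ {p : Pt | det2 (ww C S) p ≤ det2 (ww C S) y} := by
    intro y
    apply par_sub_le <;> (try simp only [det2_add, v_zero_l, v_ww_uu]) <;> linarith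
  have m1 : z ∈ par z' uu (ww C S) := h ▸ mem_par_self z uu (ww C S)
  have m2 : z' ∈ par z uu (ww C S) := h ▸ mem_par_self z' uu (ww C S)
  have e1 : det2 uu z' ≤ det2 uu z := bnd z' m1
  have e2 : det2 uu z ≤ det2 uu z' := bnd z m2
  have e3 : det2 (ww C S) z ≤ det2 (ww C S) z' := bnd2 z' m1
  have e4 : det2 (ww C S) z' ≤ det2 (ww C S) z := bnd2 z m2
  have h1 : det2 uu z = det2 uu z' := le_antisymm e2 e1
  have h2 : det2 (ww C S) z = det2 (ww C S) z' := le_antisymm e3 e4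
  rw [v_u_coord, v_u_coord] at h1
  rw [v_w_coord, v_w_coord] at h2
  apply pt_ext
  · have : S * z 0 = S * z' 0 := by rw [h1] at h2; linarith
    exact mul_left_cancel₀ (ne_of_gt hS) this
  · exact h1

theorem classify (hS : 0 < S) (hCS : C^2 + S^2 = 1) (z : Pt)
    (h : par z uu (ww C S) ∈ TT C S) : ∃ n m : ℕ, z = qA C S n m := by
  rcases h with ((((⟨n,m,hEq⟩ | ⟨n,m,hEq⟩) | ⟨n,m,hEq⟩) | ⟨n,m,hEq⟩) | ⟨n,m,hEq⟩) | ⟨n,m,hEq⟩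
  · exact ⟨n, m, par_inj C S hS z (qA C S n m) hEq⟩
  · exact absurd hEq (fun hEq => rhombus_ne_tri C S hS hCS z
      (nrm_ww C S hCS) (nrm_wd C S hCS) (nrm_w_sub_wd C S hCS) hEq)
  · exact absurd hEq (fun hEq => rhombus_ne_tri C S hS hCS z
      (nrm_dd C S hCS) (nrm_wd C S hCS) (nrm_d_sub_wd C S hCS) hEq)
  · exact absurd hEq (fun hEq => rhombus_ne_C C S hS hCS z n m hEq)
  · exact absurd hEq (fun hEq => rhombus_ne_tri C S hS hCS z
      nrm_gg nrm_uu nrm_g_sub_u hEq)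
  · exact absurd hEq (fun hEq => rhombus_ne_tri C S hS hCS z
      nrm_uu nrm_ee nrm_u_sub_e hEq)

end Classify2

end S8
namespace S8

def linFun (a b c d : ℝ) (p : Pt) : Pt := pt (a * p 0 + b * p 1) (c * p 0 + d * p 1)

lemma mv_add (a b c d : ℝ) (t : Pt) (p r : Pt) :
    mvFun a b c d t (p + r) = mvFun a b c d t p + linFun a b c d r := by
  apply pt_ext <;> simp [mvFun, linFun] <;> ring

lemma mv_image_par (a b c d : ℝ) (t q x y : Pt) :
    (mvFun a b c d t) '' par q x y
      = par (mvFun a b c d t q) (linFun a b c d x) (linFun a b c d y) := by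
  have hco : ⇑(affMap a b c d t) = mvFun a b c d t := rfl
  rw [par, ← hco, AffineMap.image_convexHull, hco]
  unfold par
  congr 1
  simp only [Set.image_insert_eq, Set.image_singleton, mv_add]

lemma mv_image_tri (a b c d : ℝ) (t q x y : Pt) :
    (mvFun a b c d t) '' tri q x y
      = tri (mvFun a b c d t q) (linFun a b c d x) (linFun a b c d y) := by
  have hco : ⇑(affMap a b c d t) = mvFun a b c d t := rfl
  rw [tri, ← hco, AffineMap.image_convexHull, hco]
  unfold tri
  congr 1
  simp only [Set.image_insert_eq, Set.image_singleton, mv_add]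

lemma trans_eq (v : Pt) : (fun p : Pt => p + v) = mvFun 1 0 0 1 v := by
  funext p
  apply pt_ext <;> simp [mvFun]

lemma mv_id (v q : Pt) : mvFun 1 0 0 1 v q = q + v := by
  apply pt_ext <;> simp [mvFun]

lemma lin_id (x : Pt) : linFun 1 0 0 1 x = x := by
  apply pt_ext <;> simp [linFun]

lemma par_translate (v q x y : Pt) :
    (fun p : Pt => p + v) '' par q x y = par (q + v) x y := by
  rw [trans_eq v, mv_image_par, mv_id, lin_id, lin_id]

section NonPer

variable (C S : ℝ)

theorem nonper (hS : 0 < S) (hCS : C^2 + S^2 = 1) : Nonperiodic (TT C S) := by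
  intro v hv hTr
  -- forward translate
  have h1 : (fun p : Pt => p + v) '' tileA C S 0 0 ∈ TT C S := by
    rw [← hTr]
    exact Set.mem_image_of_mem _ (memA C S 0 0)
  have h1' : par (qA C S 0 0 + v) uu (ww C S) ∈ TT C S := by
    rw [← par_translate]
    exact h1
  obtain ⟨n1, m1, e1⟩ := classify C S hS hCS _ h1'
  -- backward translate
  have h2 : tileA C S 0 0 ∈ translateTiles v (TT C S) := by
    rw [hTr]
    exact memA C S 0 0
  obtain ⟨t, ht, himg⟩ := h2
  have ht' : t = par (qA C S 0 0 + (-v)) uu (ww C S) := by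
    have h3 := congrArg (fun s => (fun p : Pt => p + (-v)) '' s) himg
    simp only [Set.image_image] at h3
    have hfun : (fun x : Pt => x + v + -v) = fun x : Pt => x := by
      funext x; abel
    rw [hfun, Set.image_id'] at h3
    rw [h3]
    unfold tileA
    exact par_translate (-v) (qA C S 0 0) uu (ww C S)
  rw [ht'] at ht
  obtain ⟨n2, m2, e2⟩ := classify C S hS hCS _ ht
  -- combine
  have hsum : qA C S n1 m1 + qA C S n2 m2 = qA C S 0 0 + qA C S 0 0 := by
    rw [← e1, ← e2]
    abel
  have hu := congrArg (det2 uu) hsum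
  have hw := congrArg (det2 (ww C S)) hsum
  simp only [det2_add, vqA_u] at hu
  simp only [det2_add, vqA_w] at hw
  have hm1 : (m1:ℝ) = 0 := by
    have c1 : (0:ℝ) ≤ (m1:ℝ) := Nat.cast_nonneg m1
    have c2 : (0:ℝ) ≤ (m2:ℝ) := Nat.cast_nonneg m2
    push_cast at hu
    nlinarith
  have hn1 : (n1:ℝ) = 0 := by
    have c1 : (0:ℝ) ≤ (n1:ℝ) := Nat.cast_nonneg n1
    have c2 : (0:ℝ) ≤ (n2:ℝ) := Nat.cast_nonneg n2
    push_cast at hw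
    nlinarith
  have hq : qA C S n1 m1 = qA C S 0 0 := by
    unfold qA
    rw [hm1, hn1]
    norm_num
  apply hv
  have : qA C S 0 0 + v = qA C S 0 0 + 0 := by
    rw [add_zero, e1, hq]
  exact add_left_cancel this

end NonPer

end S8
namespace S8

lemma pt_eta (p : Pt) : pt (p 0) (p 1) = p := by
  apply pt_ext <;> simp

lemma set4_comm {a b c d : Pt} : ({a, b, c, d} : Set Pt) = {b, a, c, d} := by
  ext z; simp only [mem_insert_iff, mem_singleton_iff]; tauto

lemma set3_comm {a b c : Pt} : ({a, b, c} : Set Pt) = {a, c, b} := by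
  ext z; simp only [mem_insert_iff, mem_singleton_iff]; tauto

section Isos

variable (C S : ℝ)

lemma uR_par (θ : ℝ) : uR θ = par 0 uu (ww (Real.cos θ) (Real.sin θ)) := by
  unfold uR par
  have h0 : pt 0 0 = (0:Pt) := by apply pt_ext <;> simp
  have h1 : (0:Pt) + uu = pt 1 0 := by apply pt_ext <;> simp [uu]
  have h2 : (0:Pt) + ww (Real.cos θ) (Real.sin θ) = pt (Real.cos θ) (Real.sin θ) := by
    apply pt_ext <;> simp [ww]
  have h3 : (0:Pt) + uu + ww (Real.cos θ) (Real.sin θ) = pt (1 + Real.cos θ) (Real.sin θ) := by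
    apply pt_ext <;> simp [uu, ww]
  rw [h0, ← h1, ← h2, ← h3]

lemma uT_tri : uT = tri 0 uu ee := by
  unfold uT tri
  have h0 : pt 0 0 = (0:Pt) := by apply pt_ext <;> simp
  have h1 : (0:Pt) + uu = pt 1 0 := by apply pt_ext <;> simp [uu]
  have h2 : (0:Pt) + ee = pt (1/2) (Real.sqrt 3 / 2) := by
    apply pt_ext <;> simp [ee, r3]
  rw [h0, ← h1, ← h2]

lemma isoA (n m : ℕ) : ∃ f : Pt ≃ᵢ Pt, tileA C S n m = f '' (par 0 uu (ww C S)) := by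
  refine ⟨mkIso 1 0 0 1 (qA C S n m) (by norm_num) (by norm_num) (by norm_num), ?_⟩
  rw [mkIso_coe, mv_image_par, mv_id, lin_id, lin_id, zero_add]
  rfl

lemma isoB1 (hCS : C^2 + S^2 = 1) (n m : ℕ) :
    ∃ f : Pt ≃ᵢ Pt, tileB1 C S n m = f '' (tri 0 uu ee) := by
  refine ⟨mkIso C (-S) S C (qB C S n m) hCS (by nlinarith [hCS]) (by ring), ?_⟩
  rw [mkIso_coe, mv_image_tri]
  have h0 : mvFun C (-S) S C (qB C S n m) 0 = qB C S n m := by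
    apply pt_ext <;> simp [mvFun]
  have h1 : linFun C (-S) S C uu = ww C S := by
    apply pt_ext <;> simp [linFun, uu, ww]
  have h2 : linFun C (-S) S C ee = ww C S + dd C S := by
    apply pt_ext <;> simp [linFun, ee, ww, dd] <;> ring
  rw [h0, h1, h2]
  rfl

lemma isoB2 (hCS : C^2 + S^2 = 1) (n m : ℕ) :
    ∃ f : Pt ≃ᵢ Pt, tileB2 C S n m = f '' (tri 0 uu ee) := by
  have hk : (dd C S 0)^2 + (dd C S 1)^2 = 1 := by
    simp [dd]; nlinarith [r3_sq, hCS]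
  refine ⟨mkIso (dd C S 0) (dd C S 1) (dd C S 1) (-(dd C S 0)) (qB C S n m)
    (by nlinarith [hk]) (by nlinarith [hk]) (by ring), ?_⟩
  rw [mkIso_coe, mv_image_tri]
  have h0 : mvFun (dd C S 0) (dd C S 1) (dd C S 1) (-(dd C S 0)) (qB C S n m) 0
      = qB C S n m := by
    apply pt_ext <;> simp [mvFun]
  have h1 : linFun (dd C S 0) (dd C S 1) (dd C S 1) (-(dd C S 0)) uu = dd C S := by
    apply pt_ext <;> simp [linFun, uu]
  have h2 : linFun (dd C S 0) (dd C S 1) (dd C S 1) (-(dd C S 0)) ee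
      = ww C S + dd C S := by
    apply pt_ext
    · simp [linFun, ee, ww, dd]; linear_combination C * r3_sq
    · simp [linFun, ee, ww, dd]; linear_combination S * r3_sq
  rw [h0, h1, h2]
  rfl

lemma isoC (hCS : C^2 + S^2 = 1) (n m : ℕ) :
    ∃ f : Pt ≃ᵢ Pt, tileC C S n m = f '' (par 0 uu (ww C S)) := by
  set a : ℝ := C/2 + r3*S with ha
  set b : ℝ := S/2 - r3*C with hb
  have h1 : a^2 + b^2 = 1 := by
    rw [ha, hb]; nlinarith [r3_sq, hCS]
  refine ⟨mkIso a b b (-a) (dd C S + qC C S n m) h1 (by nlinarith [h1]) (by ring), ?_⟩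
  rw [mkIso_coe, mv_image_par]
  have h0 : mvFun a b b (-a) (dd C S + qC C S n m) 0 = qC C S n m + dd C S := by
    apply pt_ext <;> simp [mvFun] <;> ring
  have h2 : linFun a b b (-a) uu = -(dd C S) := by
    apply pt_ext <;> simp [linFun, uu, dd, ha, hb] <;> ring
  have h3 : linFun a b b (-a) (ww C S) = gg := by
    apply pt_ext
    · simp [linFun, ww, gg, ha, hb]; linear_combination (1/2) * hCS
    · simp [linFun, ww, gg, ha, hb]; linear_combination (-r3) * hCS
  rw [h0, h2, h3]
  -- par (q + d) (-d) g = par q d g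
  unfold tileC par
  have k1 : qC C S n m + dd C S + -(dd C S) = qC C S n m := by abel
  rw [k1]
  congr 1
  ext z
  simp only [mem_insert_iff, mem_singleton_iff]
  tauto

lemma isoD1 (n m : ℕ) : ∃ f : Pt ≃ᵢ Pt, tileD1 n m = f '' (tri 0 uu ee) := by
  refine ⟨mkIso 1 0 0 (-1) (qD n m) (by norm_num) (by norm_num) (by norm_num), ?_⟩
  rw [mkIso_coe, mv_image_tri]
  have h0 : mvFun 1 0 0 (-1) (qD n m) 0 = qD n m := by
    apply pt_ext <;> simp [mvFun]
  have h1 : linFun 1 0 0 (-1) uu = uu := by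
    apply pt_ext <;> simp [linFun, uu]
  have h2 : linFun 1 0 0 (-1) ee = gg := by
    apply pt_ext <;> simp [linFun, ee, gg]
  rw [h0, h1, h2]
  unfold tileD1 tri
  rw [set3_comm]

lemma isoD2 (n m : ℕ) : ∃ f : Pt ≃ᵢ Pt, tileD2 n m = f '' (tri 0 uu ee) := by
  refine ⟨mkIso 1 0 0 1 (qD n m + gg) (by norm_num) (by norm_num) (by norm_num), ?_⟩
  rw [mkIso_coe, mv_image_tri]
  have h0 : mvFun 1 0 0 1 (qD n m + gg) 0 = qD n m + gg := by
    apply pt_ext <;> simp [mvFun]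
  have h1 : linFun 1 0 0 1 uu = uu := lin_id uu
  have h2 : linFun 1 0 0 1 ee = ee := lin_id ee
  rw [h0, h1, h2]
  rfl

end Isos

end S8
namespace S8

lemma cnt_fam {α : Type} (F : ℕ → ℕ → α) : {t | ∃ n m : ℕ, t = F n m}.Countable := by
  have h : {t | ∃ n m : ℕ, t = F n m} = Set.range (fun p : ℕ × ℕ => F p.1 p.2) := by
    ext t
    constructor
    · rintro ⟨n, m, rfl⟩; exact ⟨(n, m), rfl⟩
    · rintro ⟨⟨n, m⟩, rfl⟩; exact ⟨n, m, rfl⟩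
  rw [h]
  exact Set.countable_range _

section Final

variable (C S : ℝ)

lemma TT_countable : (TT C S).Countable := by
  unfold TT
  exact ((((((cnt_fam _).union (cnt_fam _)).union (cnt_fam _)).union
    (cnt_fam _)).union (cnt_fam _)).union (cnt_fam _))

lemma TT_union (hS : 0 < S) (hCS : C^2 + S^2 = 1) : ⋃₀ TT C S = univ := by
  rw [eq_univ_iff_forall]
  intro p
  rw [mem_sUnion]
  exact cover C S hS hCS p

lemma injA (hS : 0 < S) : Function.Injective (fun k : ℕ => tileA C S k 0) := by
  intro k k' h
  have h2 : qA C S k 0 = qA C S k' 0 := par_inj C S hS _ _ h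
  have h3 := congrArg (fun p : Pt => p 0) h2
  simp only [qA, add_apply, smul_apply, uu, ww, pt0] at h3
  have : (k:ℝ) = k' := by
    simpa using h3
  exact_mod_cast this

lemma bndD1_u (n m : ℕ) : tileD1 n m ⊆ {p : Pt | det2 uu p ≤ -((n:ℝ) * r3)} := by
  have e := vqD_u n m
  have hr3 := r3_pos
  apply tri_sub_le <;> (try simp only [det2_add, e, v_zero_l, v_uu_gg]) <;> linarith

lemma injD1 : Function.Injective (fun k : ℕ => tileD1 k 0) := by
  intro k k' h
  have hr3 := r3_pos
  have h' : tileD1 k 0 = tileD1 k' 0 := h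
  have m1 : qD k 0 ∈ tileD1 k' 0 := h' ▸ mem_tri_self _ _ _
  have m2 : qD k' 0 ∈ tileD1 k 0 := h'.symm ▸ mem_tri_self _ _ _
  have e1 : det2 uu (qD k 0) ≤ -((k':ℝ) * r3) := bndD1_u k' 0 m1
  have e2 : det2 uu (qD k' 0) ≤ -((k:ℝ) * r3) := bndD1_u k 0 m2
  rw [vqD_u] at e1 e2
  have : (k:ℝ) = k' := by nlinarith
  exact_mod_cast this

end Final

end S8

/-- For every angle θ with 0 < θ < π, there exists a non-periodic tiling of the
plane by isometric copies of the unit equilateral triangle and the unit rhombus of angle θ in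
which each prototile is used infinitely many times. -/
theorem stmt_8 :
    ∀ θ : ℝ, 0 < θ → θ < Real.pi →
      ∃ 𝒯 : Set (Set Pt),
        IsTilingBy 𝒯 {uT, uR θ} ∧
        Nonperiodic 𝒯 ∧
        {t ∈ 𝒯 | ∃ f : Pt ≃ᵢ Pt, t = f '' uT}.Infinite ∧
        {t ∈ 𝒯 | ∃ f : Pt ≃ᵢ Pt, t = f '' uR θ}.Infinite := by
  intro θ hθ1 hθ2
  set C : ℝ := Real.cos θ with hC
  set S : ℝ := Real.sin θ with hSdef
  have hS : 0 < S := Real.sin_pos_of_pos_of_lt_pi hθ1 hθ2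
  have hCS : C^2 + S^2 = 1 := Real.cos_sq_add_sin_sq θ
  have hUR : uR θ = S8.par 0 S8.uu (S8.ww C S) := S8.uR_par θ
  have hUT : uT = S8.tri 0 S8.uu S8.ee := S8.uT_tri
  have hURmem : uR θ ∈ ({uT, uR θ} : Set (Set Pt)) := Set.mem_insert_iff.mpr (Or.inr rfl)
  have hUTmem : uT ∈ ({uT, uR θ} : Set (Set Pt)) := Set.mem_insert _ _
  refine ⟨S8.TT C S, ⟨S8.TT_countable C S, S8.TT_union C S hS hCS,
    S8.disj C S hS hCS, ?_⟩, S8.nonper C S hS hCS, ?_, ?_⟩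
  · -- every tile is an isometric copy of a prototile
    intro t ht
    rcases ht with ((((⟨n,m,rfl⟩ | ⟨n,m,rfl⟩) | ⟨n,m,rfl⟩) | ⟨n,m,rfl⟩) | ⟨n,m,rfl⟩) | ⟨n,m,rfl⟩
    · obtain ⟨f, hf⟩ := S8.isoA C S n m
      exact ⟨uR θ, hURmem, f, by rw [hUR]; exact hf⟩
    · obtain ⟨f, hf⟩ := S8.isoB1 C S hCS n m
      exact ⟨uT, hUTmem, f, by rw [hUT]; exact hf⟩
    · obtain ⟨f, hf⟩ := S8.isoB2 C S hCS n m
      exact ⟨uT, hUTmem, f, by rw [hUT]; exact hf⟩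
    · obtain ⟨f, hf⟩ := S8.isoC C S hCS n m
      exact ⟨uR θ, hURmem, f, by rw [hUR]; exact hf⟩
    · obtain ⟨f, hf⟩ := S8.isoD1 n m
      exact ⟨uT, hUTmem, f, by rw [hUT]; exact hf⟩
    · obtain ⟨f, hf⟩ := S8.isoD2 n m
      exact ⟨uT, hUTmem, f, by rw [hUT]; exact hf⟩
  · -- infinitely many triangles
    apply Set.infinite_of_injective_forall_mem (f := fun k : ℕ => S8.tileD1 k 0)
    · exact S8.injD1
    · intro k
      refine ⟨S8.memD1 C S k 0, ?_⟩
      obtain ⟨f, hf⟩ := S8.isoD1 k 0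
      exact ⟨f, by rw [hUT]; exact hf⟩
  · -- infinitely many rhombi
    apply Set.infinite_of_injective_forall_mem (f := fun k : ℕ => S8.tileA C S k 0)
    · exact S8.injA C S hS
    · intro k
      refine ⟨S8.memA C S k 0, ?_⟩
      obtain ⟨f, hf⟩ := S8.isoA C S k 0
      exact ⟨f, by rw [hUR]; exact hf⟩
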